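/- arXiv:2212.06213 — 15 statements merged into one kernel-verified Lean document; each statement's English description precedes it below -/
import Mathlib

section
/- For a cancellative commutative monoid M, the following are equivalent: (a) M is atomic and every nonempty finite subset S of M has a common divisor d ∈ M such that s−d satisfies ACCP for some s ∈ S; (b) every nonempty finite subset S of M has a common divisor d that is a sum of atoms (possibly empty) such that s−d satisfies ACCP for some s ∈ S. -/
def PIdeal {M : Type*} [AddCommMonoid M] (b : M) : Set M := {x | ∃ c, x = b + c}

def ElemACCP {M : Type*} [AddCommMonoid M] (b : M) : Prop :=
  ∀ f : ℕ → M, f 0 = b → (∀ n, PIdeal (f n) ⊆ PIdeal (f (n + 1))) →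
    ∃ N, ∀ n, N ≤ n → PIdeal (f n) = PIdeal (f N)

def IsAddAtom {M : Type*} [AddCommMonoid M] (a : M) : Prop :=
  ¬ IsAddUnit a ∧ ∀ u v : M, a = u + v → IsAddUnit u ∨ IsAddUnit v

/-- `M` is atomic: every non-invertible element is a sum of atoms. -/
def AddAtomic (M : Type*) [AddCommMonoid M] : Prop :=
  ∀ b : M, ¬ IsAddUnit b → ∃ l : Multiset M, (∀ a ∈ l, IsAddAtom a) ∧ l.sum = b

section Aux
variable {M : Type*} [AddCancelCommMonoid M]

def SumAtoms (x : M) : Prop :=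
  IsAddUnit x ∨ ∃ l : Multiset M, (∀ a ∈ l, IsAddAtom a) ∧ l.sum = x

lemma pideal_subset {a b c : M} (h : a = b + c) : PIdeal a ⊆ PIdeal b := by
  rintro x ⟨e, rfl⟩
  exact ⟨c + e, by rw [h, add_assoc]⟩

lemma mem_self {a : M} : a ∈ PIdeal a := ⟨0, (add_zero a).symm⟩

lemma atom_add_unit {u a : M} (hu : IsAddUnit u) (ha : IsAddAtom a) : IsAddAtom (u + a) := by
  obtain ⟨w, rfl⟩ := hu
  have hinv : (↑(-w) : M) + ↑w = 0 := by
    rw [← AddUnits.val_add, neg_add_cancel, AddUnits.val_zero]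
  constructor
  · intro h
    apply ha.1
    have : a = ↑(-w) + (↑w + a) := by rw [← add_assoc, hinv, zero_add]
    rw [this]
    exact ((-w).isAddUnit).add h
  · intro p q hpq
    have ha' : a = (↑(-w) + p) + q := by
      rw [add_assoc, ← hpq, ← add_assoc, hinv, zero_add]
    rcases ha.2 _ _ ha' with h | h
    · left
      have : p = ↑w + (↑(-w) + p) := by rw [← add_assoc, ← AddUnits.val_add, add_neg_cancel, AddUnits.val_zero, zero_add]
      rw [this]; exact (w.isAddUnit).add h
    · right; exact h

lemma sumAtoms_add {x y : M} (hx : SumAtoms x) (hy : SumAtoms y) : SumAtoms (x + y) := by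
  have key : ∀ u v : M, IsAddUnit u → SumAtoms v → SumAtoms (u + v) := by
    rintro u v hu (hv | ⟨l, hl, rfl⟩)
    · exact Or.inl (hu.add hv)
    · rcases Multiset.empty_or_exists_mem l with rfl | ⟨a, ha⟩
      · simp only [Multiset.sum_zero, add_zero]; exact Or.inl hu
      · obtain ⟨t, rfl⟩ := Multiset.exists_cons_of_mem ha
        refine Or.inr ⟨(u + a) ::ₘ t, ?_, ?_⟩
        · intro b hb
          rcases Multiset.mem_cons.1 hb with rfl | hb
          · exact atom_add_unit hu (hl a (Multiset.mem_cons_self _ _))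
          · exact hl b (Multiset.mem_cons_of_mem hb)
        · simp [Multiset.sum_cons, add_assoc]
  rcases hx with hx | ⟨l, hl, rfl⟩
  · exact key _ _ hx hy
  · rcases hy with hy | ⟨l', hl', rfl⟩
    · rw [add_comm]; exact key _ _ hy (Or.inr ⟨l, hl, rfl⟩)
    · refine Or.inr ⟨l + l', ?_, by rw [Multiset.sum_add]⟩
      intro a ha
      rcases Multiset.mem_add.1 ha with h | h
      · exact hl a h
      · exact hl' a h

lemma step_exists (x : M) (hx : ¬ SumAtoms x) :
    ∃ u v : M, x = u + v ∧ ¬ SumAtoms u ∧ ¬ IsAddUnit v := by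
  have hxu : ¬ IsAddUnit x := fun h => hx (Or.inl h)
  have hxa : ¬ IsAddAtom x := by
    intro h
    exact hx (Or.inr ⟨{x}, by simpa using h, by simp⟩)
  rw [IsAddAtom, not_and] at hxa
  have := hxa hxu
  push_neg at this
  obtain ⟨u, v, hx', hu, hv⟩ := this
  by_cases h : SumAtoms u
  · by_cases h' : SumAtoms v
    · exact absurd (sumAtoms_add h h') (hx' ▸ hx)
    · exact ⟨v, u, by rw [hx', add_comm], h', hu⟩
  · exact ⟨u, v, hx', h, hv⟩

lemma accp_sumAtoms {c : M} (h : ElemACCP c) : SumAtoms c := by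
  by_contra hc
  choose u v hx hu hv using step_exists (M := M)
  let g : ℕ → {x : M // ¬ SumAtoms x} := fun n =>
    Nat.rec ⟨c, hc⟩ (fun _ p => ⟨u p.1 p.2, hu p.1 p.2⟩) n
  have hg : ∀ n, (g n).1 = (g (n+1)).1 + v (g n).1 (g n).2 := fun n => hx (g n).1 (g n).2
  obtain ⟨N, hN⟩ := h (fun n => (g n).1) rfl (fun n => pideal_subset (hg n))
  have h1 : PIdeal (g (N+1)).1 = PIdeal (g N).1 := hN (N+1) (Nat.le_succ N)
  obtain ⟨e, he⟩ : (g (N+1)).1 ∈ PIdeal (g N).1 := h1 ▸ mem_self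
  have : (g N).1 + 0 = (g N).1 + (e + v (g N).1 (g N).2) := by
    rw [add_zero]
    conv_lhs => rw [hg N, he]
    rw [add_assoc]
  have h0 : e + v (g N).1 (g N).2 = 0 := (add_left_cancel this).symm
  exact hv (g N).1 (g N).2 (IsAddUnit.of_add_eq_zero e (by rw [add_comm]; exact h0))

lemma elemACCP_congr {b b' : M} (h1 : PIdeal b = PIdeal b') (h : ElemACCP b) :
    ElemACCP b' := by
  intro f hf0 hchain
  set g : ℕ → M := fun n => if n = 0 then b else f n with hg
  have hgchain : ∀ n, PIdeal (g n) ⊆ PIdeal (g (n + 1)) := by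
    intro n
    match n with
    | 0 =>
      simp only [hg]
      simpa [h1, hf0] using hchain 0
    | Nat.succ m =>
      simpa [hg] using hchain (m+1)
  obtain ⟨N, hN⟩ := h g (by simp [hg]) hgchain
  refine ⟨N + 1, fun n hn => ?_⟩
  have hfg : ∀ m, 1 ≤ m → f m = g m := fun m hm => by
    simp [hg, Nat.one_le_iff_ne_zero.mp hm]
  rw [hfg n (le_trans (Nat.le_add_left 1 N) hn), hfg (N+1) (Nat.le_add_left 1 N),
    hN n (le_trans (Nat.le_succ N) hn), hN (N+1) (Nat.le_succ N)]

end Aux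

theorem stmt1 {M : Type*} [AddCancelCommMonoid M] :
    (AddAtomic M ∧ ∀ S : Finset M, S.Nonempty →
        ∃ d : M, (∀ s ∈ S, ∃ c, s = d + c) ∧ ∃ s ∈ S, ∃ c, s = d + c ∧ ElemACCP c)
    ↔
    (∀ S : Finset M, S.Nonempty →
        ∃ d : M, (∃ l : Multiset M, (∀ a ∈ l, IsAddAtom a) ∧ l.sum = d) ∧
          (∀ s ∈ S, ∃ c, s = d + c) ∧ ∃ s ∈ S, ∃ c, s = d + c ∧ ElemACCP c) := by
  constructor
  · rintro ⟨hatomic, hcd⟩ S hS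
    obtain ⟨d, hdiv, s, hsS, c, hsc, hacc⟩ := hcd S hS
    by_cases hd : IsAddUnit d
    · refine ⟨0, ⟨0, by simp, by simp⟩, fun t ht => ⟨t, (zero_add t).symm⟩,
        s, hsS, s, (zero_add s).symm, ?_⟩
      obtain ⟨w, rfl⟩ := hd
      have h1 : PIdeal c = PIdeal s := by
        apply le_antisymm
        · have hcs : c = s + ↑(-w) := by
            rw [hsc, add_comm (↑w : M) c, add_assoc, ← AddUnits.val_add, add_neg_cancel,
              AddUnits.val_zero, add_zero]
          exact pideal_subset hcs
        · exact pideal_subset (hsc.trans (add_comm _ _))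
      exact elemACCP_congr h1 hacc
    · obtain ⟨l, hl, hls⟩ := hatomic d hd
      exact ⟨d, ⟨l, hl, hls⟩, hdiv, s, hsS, c, hsc, hacc⟩
  · intro h
    constructor
    · intro b hb
      obtain ⟨d, ⟨l, hl, hls⟩, _, s, hsS, c, hsc, hacc⟩ := h {b} ⟨b, Finset.mem_singleton_self b⟩
      rw [Finset.mem_singleton] at hsS
      have hc : SumAtoms c := accp_sumAtoms hacc
      have hd : SumAtoms d := Or.inr ⟨l, hl, hls⟩
      have hbS : SumAtoms b := by rw [← hsS, hsc]; exact sumAtoms_add hd hc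
      rcases hbS with h' | h'
      · exact absurd h' hb
      · exact h'
    · intro S hS
      obtain ⟨d, _, hdiv, hw⟩ := h S hS
      exact ⟨d, hdiv, hw⟩
end

section
/- Every weak-ACCP cancellative commutative monoid is strongly atomic. -/
def AddWeakACCP (M : Type*) [AddCommMonoid M] : Prop :=
  AddAtomic M ∧ ∀ S : Finset M, S.Nonempty →
    ∃ d : M, (∀ s ∈ S, ∃ c, s = d + c) ∧ ∃ s ∈ S, ∃ c, s = d + c ∧ ElemACCP c

/-- `M` is strongly atomic: any `b, c` have a common divisor `d` that is a sum of atoms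
such that the only common divisors of `b - d` and `c - d` are invertible. -/
def AddStronglyAtomic (M : Type*) [AddCommMonoid M] : Prop :=
  ∀ b c : M, ∃ d b' c' : M, b = d + b' ∧ c = d + c' ∧
    (∃ l : Multiset M, (∀ a ∈ l, IsAddAtom a) ∧ l.sum = d) ∧
    ∀ e : M, (∃ x, b' = e + x) → (∃ y, c' = e + y) → IsAddUnit e

section Aux
variable {M : Type*} [AddCancelCommMonoid M]

/-- `x` is a proper quotient of `y`: `y = e + x` with `e` not a unit. -/
private def MyRel (x y : M) : Prop := ∃ e, ¬ IsAddUnit e ∧ y = e + x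

private lemma acc_of_elemACCP {b : M} (hb : ElemACCP b) : Acc (MyRel (M := M)) b := by
  by_contra hacc
  have key : ∀ x : M, ¬ Acc (MyRel (M := M)) x →
      ∃ y : M, MyRel y x ∧ ¬ Acc (MyRel (M := M)) y := by
    intro x hx
    by_contra hy
    push_neg at hy
    exact hx (Acc.intro x fun y hyx => hy y hyx)
  let F : ℕ → {x : M // ¬ Acc (MyRel (M := M)) x} := fun n =>
    Nat.rec ⟨b, hacc⟩
      (fun _ p => ⟨Classical.choose (key p.1 p.2),
        (Classical.choose_spec (key p.1 p.2)).2⟩) n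
  have hstep : ∀ n, MyRel (F (n + 1)).1 (F n).1 := fun n =>
    (Classical.choose_spec (key (F n).1 (F n).2)).1
  have hmono : ∀ n, PIdeal ((F n).1) ⊆ PIdeal ((F (n + 1)).1) := by
    intro n x hx
    obtain ⟨c, hc⟩ := hx
    obtain ⟨e, _, he⟩ := hstep n
    exact ⟨e + c, by rw [hc, he]; abel⟩
  obtain ⟨N, hN⟩ := hb (fun n => (F n).1) rfl hmono
  have h1 : PIdeal ((F (N + 1)).1) = PIdeal ((F N).1) := hN (N + 1) (Nat.le_succ N)
  obtain ⟨e, he, heq⟩ := hstep N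
  have : (F (N + 1)).1 ∈ PIdeal ((F N).1) := h1 ▸ ⟨0, (add_zero _).symm⟩
  obtain ⟨c, hc⟩ := this
  rw [heq] at hc
  have key2 : (F (N + 1)).1 + (e + c) = (F (N + 1)).1 + 0 := by
    rw [add_zero]
    conv_rhs => rw [hc]
    abel
  exact he (IsAddUnit.of_add_eq_zero (a := e) c (add_left_cancel key2))

private lemma lemL (hat : AddAtomic M) : ∀ b : M, Acc (MyRel (M := M)) b → ∀ c : M,
    ∃ d b' c' : M, b = d + b' ∧ c = d + c' ∧
      (∃ l : Multiset M, (∀ a ∈ l, IsAddAtom a) ∧ l.sum = d) ∧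
      ∀ e : M, (∃ x, b' = e + x) → (∃ y, c' = e + y) → IsAddUnit e := by
  intro b hb
  induction hb with
  | intro b _ ih =>
    intro c
    by_cases hcop : ∀ e : M, (∃ x, b = e + x) → (∃ y, c = e + y) → IsAddUnit e
    · exact ⟨0, b, c, (zero_add b).symm, (zero_add c).symm,
        ⟨0, by simp, Multiset.sum_zero⟩, hcop⟩
    · push_neg at hcop
      obtain ⟨e, ⟨b1, hb1⟩, ⟨c1, hc1⟩, he⟩ := hcop
      obtain ⟨d, b', c', h1, h2, ⟨l, hl, hls⟩, hcp⟩ := ih b1 ⟨e, he, hb1⟩ c1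
      obtain ⟨le, hle, hles⟩ := hat e he
      refine ⟨e + d, b', c', by rw [hb1, h1, add_assoc], by rw [hc1, h2, add_assoc],
        ⟨le + l, ?_, by rw [Multiset.sum_add, hles, hls]⟩, hcp⟩
      intro a ha
      rcases Multiset.mem_add.1 ha with h | h
      exacts [hle a h, hl a h]

private lemma main_aux (hat : AddAtomic M) (b c d₀ b₀ c₀ : M)
    (hb : b = d₀ + b₀) (hc : c = d₀ + c₀) (hacc : ElemACCP b₀) :
    ∃ d b' c' : M, b = d + b' ∧ c = d + c' ∧
      (∃ l : Multiset M, (∀ a ∈ l, IsAddAtom a) ∧ l.sum = d) ∧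
      ∀ e : M, (∃ x, b' = e + x) → (∃ y, c' = e + y) → IsAddUnit e := by
  obtain ⟨d, b', c', h1, h2, ⟨l, hl, hls⟩, hcp⟩ := lemL hat b₀ (acc_of_elemACCP hacc) c₀
  by_cases hd₀ : IsAddUnit d₀
  · obtain ⟨u, hu⟩ := isAddUnit_iff_exists_neg.1 hd₀
    refine ⟨d, d₀ + b', d₀ + c', ?_, ?_, ⟨l, hl, hls⟩, ?_⟩
    · rw [hb, h1]; abel
    · rw [hc, h2]; abel
    · rintro e ⟨x, hx⟩ ⟨y, hy⟩
      refine hcp e ⟨u + x, ?_⟩ ⟨u + y, ?_⟩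
      · have : u + (d₀ + b') = u + (e + x) := by rw [hx]
        calc b' = u + d₀ + b' := by rw [add_comm u d₀, hu, zero_add]
        _ = e + (u + x) := by rw [add_assoc, this]; abel
      · have : u + (d₀ + c') = u + (e + y) := by rw [hy]
        calc c' = u + d₀ + c' := by rw [add_comm u d₀, hu, zero_add]
        _ = e + (u + y) := by rw [add_assoc, this]; abel
  · obtain ⟨l₀, hl₀, hl₀s⟩ := hat d₀ hd₀
    refine ⟨d₀ + d, b', c', by rw [hb, h1, add_assoc], by rw [hc, h2, add_assoc],
      ⟨l₀ + l, ?_, by rw [Multiset.sum_add, hl₀s, hls]⟩, hcp⟩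
    intro a ha
    rcases Multiset.mem_add.1 ha with h | h
    exacts [hl₀ a h, hl a h]

end Aux

theorem stmt3 (M : Type*) [AddCancelCommMonoid M] (h : AddWeakACCP M) :
    AddStronglyAtomic M := by
  classical
  obtain ⟨hat, hw⟩ := h
  intro b c
  obtain ⟨d₀, hdiv, s, hs, c₀, hsc, hacc⟩ := hw {b, c} ⟨b, Finset.mem_insert_self b {c}⟩
  obtain ⟨b₁, hb₁⟩ := hdiv b (Finset.mem_insert_self b {c})
  obtain ⟨c₁, hc₁⟩ := hdiv c (Finset.mem_insert_of_mem (Finset.mem_singleton_self c))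
  rcases Finset.mem_insert.1 hs with rfl | hs'
  · exact main_aux hat s c d₀ c₀ c₁ hsc hc₁ hacc
  · rw [Finset.mem_singleton] at hs'
    subst hs'
    obtain ⟨d, c', b', h1, h2, hsum, hcp⟩ := main_aux hat s b d₀ c₀ b₁ hsc hb₁ hacc
    exact ⟨d, b', c', h2, h1, hsum, fun e hx hy => hcp e hy hx⟩
end

section
/- For a prime p and increasing sequence (pₙ) enumerating the primes different from p, the monoid Gₚ = ⟨1/(pⁿ pₙ) : n⟩ ⊆ ℚ≥0 does not satisfy ACCP: the ascending chain of principal ideals (1/pⁿ + Gₚ)ₙ∈ℕ is strictly increasing and does not stabilize. -/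
/-- The coset `b + G` inside `ℚ` (a "principal ideal" of the submonoid `G`). -/
def cosetQ (G : AddSubmonoid ℚ) (b : ℚ) : Set ℚ := {x | ∃ c ∈ G, x = b + c}

/-- `b` satisfies ACCP in `G`. -/
def ACCPQat (G : AddSubmonoid ℚ) (b : ℚ) : Prop :=
  ∀ f : ℕ → ℚ, f 0 = b → (∀ n, f n ∈ G) →
    (∀ n, cosetQ G (f n) ⊆ cosetQ G (f (n + 1))) →
      ∃ N, ∀ n, N ≤ n → cosetQ G (f n) = cosetQ G (f N)

/-- `G` satisfies ACCP. -/
def ACCPQ (G : AddSubmonoid ℚ) : Prop := ∀ b ∈ G, ACCPQat G b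

theorem stmt5 (p : ℕ) (hp : p.Prime) (ps : ℕ → ℕ)
    (hmono : StrictMono ps) (hprime : ∀ n, (ps n).Prime) (hne : ∀ n, ps n ≠ p)
    (hall : ∀ q : ℕ, q.Prime → q ≠ p → ∃ n, ps n = q)
    (G : AddSubmonoid ℚ)
    (hG : G = AddSubmonoid.closure {x : ℚ | ∃ n : ℕ, x = 1 / ((p : ℚ) ^ n * (ps n : ℚ))}) :
    (∀ n : ℕ, (1 / (p : ℚ) ^ (n + 1)) ∈ G) ∧
    (∀ n : ℕ, cosetQ G (1 / (p : ℚ) ^ (n + 1)) ⊆ cosetQ G (1 / (p : ℚ) ^ (n + 2)) ∧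
      cosetQ G (1 / (p : ℚ) ^ (n + 1)) ≠ cosetQ G (1 / (p : ℚ) ^ (n + 2))) ∧
    ¬ ACCPQ G := by
  have hp0 : (p : ℚ) ≠ 0 := by exact_mod_cast hp.ne_zero
  have hp2 : (2 : ℚ) ≤ (p : ℚ) := by exact_mod_cast hp.two_le
  -- every element of G is nonnegative
  have hGpos : ∀ x ∈ G, (0 : ℚ) ≤ x := by
    intro x hx
    rw [hG] at hx
    refine AddSubmonoid.closure_induction ?_ le_rfl ?_ hx
    · rintro y ⟨n, rfl⟩
      positivity
    · intro a b _ _ ha hb; linarith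
  -- membership of 1/p^(n+1)
  have hmem : ∀ n : ℕ, (1 / (p : ℚ) ^ (n + 1)) ∈ G := by
    intro n
    have hgen : (1 / ((p : ℚ) ^ (n + 1) * (ps (n + 1) : ℚ))) ∈ G := by
      rw [hG]; exact AddSubmonoid.subset_closure ⟨n + 1, rfl⟩
    have := G.nsmul_mem hgen (ps (n + 1))
    have hq0 : ((ps (n + 1) : ℚ)) ≠ 0 := by exact_mod_cast (hprime (n + 1)).ne_zero
    have heq : (ps (n + 1)) • (1 / ((p : ℚ) ^ (n + 1) * (ps (n + 1) : ℚ)))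
        = 1 / (p : ℚ) ^ (n + 1) := by
      rw [nsmul_eq_mul]
      field_simp
    rwa [heq] at this
  -- the difference between consecutive terms lies in G
  have hdiff : ∀ n : ℕ,
      (1 / (p : ℚ) ^ (n + 1) - 1 / (p : ℚ) ^ (n + 2)) ∈ G := by
    intro n
    have := G.nsmul_mem (hmem (n + 1)) (p - 1)
    have heq : (p - 1) • (1 / (p : ℚ) ^ (n + 2))
        = 1 / (p : ℚ) ^ (n + 1) - 1 / (p : ℚ) ^ (n + 2) := by
      rw [nsmul_eq_mul]
      have : ((p - 1 : ℕ) : ℚ) = (p : ℚ) - 1 := by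
        have := hp.one_lt
        push_cast [Nat.cast_sub (by omega : 1 ≤ p)]
        ring
      rw [this]
      field_simp
      ring
    rwa [heq] at this
  -- inclusions
  have hsub : ∀ n : ℕ,
      cosetQ G (1 / (p : ℚ) ^ (n + 1)) ⊆ cosetQ G (1 / (p : ℚ) ^ (n + 2)) := by
    intro n x hx
    obtain ⟨c, hc, rfl⟩ := hx
    exact ⟨(1 / (p : ℚ) ^ (n + 1) - 1 / (p : ℚ) ^ (n + 2)) + c,
      G.add_mem (hdiff n) hc, by ring⟩
  -- strictness
  have hne2 : ∀ n : ℕ,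
      cosetQ G (1 / (p : ℚ) ^ (n + 1)) ≠ cosetQ G (1 / (p : ℚ) ^ (n + 2)) := by
    intro n h
    have hx : (1 / (p : ℚ) ^ (n + 2)) ∈ cosetQ G (1 / (p : ℚ) ^ (n + 2)) :=
      ⟨0, G.zero_mem, by ring⟩
    rw [← h] at hx
    obtain ⟨c, hc, hcx⟩ := hx
    have hc0 := hGpos c hc
    have hlt : (1 / (p : ℚ) ^ (n + 2)) < 1 / (p : ℚ) ^ (n + 1) := by
      have hpow : (0 : ℚ) < (p : ℚ) ^ (n + 1) := by positivity
      rw [div_lt_div_iff₀ (by positivity) hpow]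
      have : (p : ℚ) ^ (n + 2) = (p : ℚ) ^ (n + 1) * (p : ℚ) := by ring
      rw [this]
      nlinarith
    linarith
  refine ⟨hmem, fun n => ⟨hsub n, hne2 n⟩, ?_⟩
  intro h
  obtain ⟨N, hN⟩ := h (1 / (p : ℚ) ^ (0 + 1)) (hmem 0)
    (fun n => 1 / (p : ℚ) ^ (n + 1)) rfl hmem hsub
  exact hne2 N ((hN (N + 1) (by omega)).symm)
end

section
/- Let q ∈ ℚ ∩ (0,1) with 1/q ∉ ℕ, and let Sq = ⟨qⁿ : n ∈ ℕ₀⟩ ⊆ ℚ≥0. Then Sq does not satisfy ACCP: writing q = n(q)/d(q) in lowest terms, the chain of principal ideals (d(q)qⁿ + Sq)ₙ is ascending and does not stabilize. -/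
theorem stmt6 (q : ℚ) (h0 : 0 < q) (h1 : q < 1) (hnotrec : ∀ n : ℕ, 1 / q ≠ (n : ℚ))
    (S : AddSubmonoid ℚ)
    (hS : S = AddSubmonoid.closure {x : ℚ | ∃ n : ℕ, x = q ^ n}) :
    (∀ n : ℕ, (q.den : ℚ) * q ^ n ∈ S) ∧
    (∀ n : ℕ, cosetQ S ((q.den : ℚ) * q ^ n) ⊆ cosetQ S ((q.den : ℚ) * q ^ (n + 1))) ∧
    (∀ N : ℕ, ∃ n : ℕ, N ≤ n ∧
      cosetQ S ((q.den : ℚ) * q ^ n) ≠ cosetQ S ((q.den : ℚ) * q ^ N)) ∧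
    ¬ ACCPQ S := by
  -- S consists of nonnegative rationals
  have hnn : ∀ x ∈ S, (0 : ℚ) ≤ x := by
    intro x hx
    rw [hS] at hx
    induction hx using AddSubmonoid.closure_induction with
    | mem y hy => obtain ⟨n, rfl⟩ := hy; positivity
    | zero => exact le_refl 0
    | add a b _ _ ha hb => exact add_nonneg ha hb
  have hpow : ∀ n : ℕ, q ^ n ∈ S := by
    intro n
    rw [hS]
    exact AddSubmonoid.subset_closure ⟨n, rfl⟩
  -- natural multiples of elements of S are in S
  have hsmul : ∀ (k : ℕ) (x : ℚ), x ∈ S → (k : ℚ) * x ∈ S := by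
    intro k x hx
    rw [← nsmul_eq_mul]
    exact nsmul_mem hx k
  have hmem : ∀ n : ℕ, (q.den : ℚ) * q ^ n ∈ S := fun n => hsmul q.den _ (hpow n)
  -- the key identity
  have hdq : (q.den : ℚ) * q = (q.num.toNat : ℚ) := by
    have : (q.num.toNat : ℤ) = q.num := Int.toNat_of_nonneg (le_of_lt (Rat.num_pos.mpr h0))
    rw [mul_comm, Rat.mul_den_eq_num]
    exact_mod_cast this.symm
  have hlt : q.num.toNat < q.den := by
    have hd : (0 : ℚ) < (q.den : ℚ) := by positivity
    have : (q.num.toNat : ℚ) < (q.den : ℚ) := by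
      rw [← hdq]; nlinarith
    exact_mod_cast this
  have hkey : ∀ n : ℕ, (q.den : ℚ) * q ^ n =
      (q.den : ℚ) * q ^ (n + 1) + ((q.den - q.num.toNat : ℕ) : ℚ) * q ^ n := by
    intro n
    have : ((q.den - q.num.toNat : ℕ) : ℚ) = (q.den : ℚ) - (q.num.toNat : ℚ) := by
      push_cast [Nat.cast_sub hlt.le]; ring
    rw [this, ← hdq]
    ring
  have hchain : ∀ n : ℕ, cosetQ S ((q.den : ℚ) * q ^ n) ⊆
      cosetQ S ((q.den : ℚ) * q ^ (n + 1)) := by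
    intro n x hx
    obtain ⟨c, hc, rfl⟩ := hx
    refine ⟨((q.den - q.num.toNat : ℕ) : ℚ) * q ^ n + c, add_mem (hsmul _ _ (hpow n)) hc, ?_⟩
    rw [hkey n]; ring
  have hne : ∀ N : ℕ, ∃ n : ℕ, N ≤ n ∧
      cosetQ S ((q.den : ℚ) * q ^ n) ≠ cosetQ S ((q.den : ℚ) * q ^ N) := by
    intro N
    refine ⟨N + 1, Nat.le_succ N, fun h => ?_⟩
    have hmemc : (q.den : ℚ) * q ^ (N + 1) ∈ cosetQ S ((q.den : ℚ) * q ^ N) := by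
      rw [← h]; exact ⟨0, zero_mem S, by ring⟩
    obtain ⟨c, hc, hcq⟩ := hmemc
    have hcpos : (0 : ℚ) ≤ c := hnn c hc
    have hqlt : q ^ (N + 1) < q ^ N := by
      calc q ^ (N + 1) = q ^ N * q := by ring
        _ < q ^ N * 1 := by
            exact mul_lt_mul_of_pos_left h1 (pow_pos h0 N)
        _ = q ^ N := by ring
    have hdpos : (0 : ℚ) < (q.den : ℚ) := by positivity
    have : (q.den : ℚ) * q ^ (N + 1) < (q.den : ℚ) * q ^ N :=
      mul_lt_mul_of_pos_left hqlt hdpos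
    linarith [hcq, hcpos]
  refine ⟨hmem, hchain, hne, ?_⟩
  intro hacc
  have h0' : (q.den : ℚ) * q ^ 0 ∈ S := hmem 0
  obtain ⟨Nst, hNst⟩ := hacc _ h0' (fun n => (q.den : ℚ) * q ^ n) rfl hmem hchain
  obtain ⟨n, hn, hne'⟩ := hne Nst
  exact hne' (hNst n hn)
end

section
/- Let (pₙ) be the increasing enumeration of the primes, set qₙ = pₙ·pₙ₊₂, and let M = ⟨1/qₙ : n ∈ ℕ⟩ ⊆ ℚ≥0. Then the only common divisor of 1/2 and 1/3 in M is 0. -/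
/-- The `n`-th prime, 0-indexed: `nthPrime 0 = 2`, `nthPrime 1 = 3`, ... -/
noncomputable def nthPrime (n : ℕ) : ℕ := Nat.nth Nat.Prime n

/-- The monoid `M = ⟨1/(pₙ pₙ₊₂) : n⟩`. -/
noncomputable def Mq : AddSubmonoid ℚ :=
  AddSubmonoid.closure {x : ℚ | ∃ n : ℕ, x = 1 / ((nthPrime n : ℚ) * (nthPrime (n + 2) : ℚ))}

lemma nthPrime_prime (n : ℕ) : (nthPrime n).Prime :=
  Nat.nth_mem_of_infinite Nat.infinite_setOf_prime n
lemma nthPrime_inj : Function.Injective nthPrime :=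
  Nat.nth_injective Nat.infinite_setOf_prime
lemma nthPrime_zero : nthPrime 0 = 2 := by
  have := Nat.nth_count (p := Nat.Prime) (n := 2) (by norm_num)
  simpa [nthPrime, Nat.count_succ] using this
lemma nthPrime_one : nthPrime 1 = 3 := by
  have := Nat.nth_count (p := Nat.Prime) (n := 3) (by norm_num)
  simpa [nthPrime, Nat.count_succ] using this
lemma nthPrime_two : nthPrime 2 = 5 := by
  have := Nat.nth_count (p := Nat.Prime) (n := 5) (by norm_num)
  simpa [nthPrime, Nat.count_succ] using this
lemma nthPrime_three : nthPrime 3 = 7 := by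
  have := Nat.nth_count (p := Nat.Prime) (n := 7) (by norm_num)
  simpa [nthPrime, Nat.count_succ] using this

/-- denominators of `x` only involve primes of index-parity `par`. -/
def Ppar (par : ℕ) (x : ℚ) : Prop :=
  ∀ p : ℕ, p.Prime → p ∣ x.den → ∃ k, p = nthPrime (2 * k + par)

lemma Ppar_zero (par : ℕ) : Ppar par 0 := by
  intro p hp hpd
  simp [Rat.den_ofNat] at hpd
  exact absurd hpd hp.one_lt.ne'
  -- p ∣ 1 impossible

lemma Ppar_add {par : ℕ} {x y : ℚ} (hx : Ppar par x) (hy : Ppar par y) :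
    Ppar par (x + y) := by
  intro p hp hpd
  have h1 : p ∣ x.den * y.den := hpd.trans (Rat.add_den_dvd x y)
  rcases (Nat.Prime.dvd_mul hp).mp h1 with h | h
  · exact hx p hp h
  · exact hy p hp h

lemma Ppar_neg {par : ℕ} {x : ℚ} (hx : Ppar par x) : Ppar par (-x) := by
  intro p hp hpd
  exact hx p hp (by rwa [Rat.neg_den] at hpd)

lemma den_one_div_nat (n : ℕ) : ((1 : ℚ) / (n : ℚ)).den ∣ n := by
  have h : ((1 : ℚ) / (n : ℚ)) = Rat.divInt 1 (n : ℤ) := by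
    rw [Rat.divInt_eq_div]; push_cast; ring
  have := Rat.den_dvd 1 (n : ℤ)
  rw [← h] at this
  exact_mod_cast this

lemma Ppar_gen {n par k : ℕ} (hn : n = 2 * k + par) :
    Ppar par (1 / ((nthPrime n : ℚ) * (nthPrime (n + 2) : ℚ))) := by
  intro p hp hpd
  have hcast : ((nthPrime n : ℚ) * (nthPrime (n + 2) : ℚ)) =
      ((nthPrime n * nthPrime (n + 2) : ℕ) : ℚ) := by push_cast; ring
  rw [hcast] at hpd
  have h1 : p ∣ nthPrime n * nthPrime (n + 2) :=
    hpd.trans (den_one_div_nat _)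
  rcases (Nat.Prime.dvd_mul hp).mp h1 with h | h
  · exact ⟨k, ((Nat.prime_dvd_prime_iff_eq hp (nthPrime_prime n)).mp h).trans (by rw [hn])⟩
  · exact ⟨k + 1, ((Nat.prime_dvd_prime_iff_eq hp (nthPrime_prime (n + 2))).mp h).trans
      (by rw [hn]; ring_nf)⟩

lemma gen_nonneg (n : ℕ) : (0 : ℚ) ≤ 1 / ((nthPrime n : ℚ) * (nthPrime (n + 2) : ℚ)) := by
  positivity

/-- decomposition of any element of `Mq` into even-chain and odd-chain parts -/
lemma Mq_decomp {x : ℚ} (hx : x ∈ Mq) :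
    ∃ u v : ℚ, 0 ≤ u ∧ Ppar 0 u ∧ 0 ≤ v ∧ Ppar 1 v ∧ x = u + v := by
  refine AddSubmonoid.closure_induction ?_ ?_ ?_ hx
  · rintro y ⟨n, rfl⟩
    rcases Nat.even_or_odd n with ⟨k, hk⟩ | ⟨k, hk⟩
    · exact ⟨_, 0, gen_nonneg n, Ppar_gen (par := 0) (k := k) (by omega), le_refl 0, Ppar_zero 1,
        (add_zero _).symm⟩
    · exact ⟨0, _, le_refl 0, Ppar_zero 0, gen_nonneg n, Ppar_gen (par := 1) (k := k) (by omega),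
        (zero_add _).symm⟩
  · exact ⟨0, 0, le_refl 0, Ppar_zero 0, le_refl 0, Ppar_zero 1, (add_zero 0).symm⟩
  · rintro y z - - ⟨u1, v1, hu1, hpu1, hv1, hpv1, rfl⟩ ⟨u2, v2, hu2, hpu2, hv2, hpv2, rfl⟩
    exact ⟨u1 + u2, v1 + v2, by linarith, Ppar_add hpu1 hpu2, by linarith,
      Ppar_add hpv1 hpv2, by ring⟩

lemma Ppar_both_den {s : ℚ} (h0 : Ppar 0 s) (h1 : Ppar 1 s) : s.den = 1 := by
  by_contra hden
  have hpos : s.den ≠ 0 := s.den_nz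
  have hp : s.den.minFac.Prime := Nat.minFac_prime hden
  obtain ⟨k, hk⟩ := h0 _ hp (Nat.minFac_dvd _)
  obtain ⟨j, hj⟩ := h1 _ hp (Nat.minFac_dvd _)
  have := nthPrime_inj (hk.symm.trans hj)
  omega

lemma Ppar_small_zero {s : ℚ} (h0 : Ppar 0 s) (h1 : Ppar 1 s) (hge : 0 ≤ s)
    (hlt : s < 1) : s = 0 := by
  have hden := Ppar_both_den h0 h1
  have hs : (s.num : ℚ) = s := by exact_mod_cast ((Rat.den_eq_one_iff s).mp hden)
  have h1' : (s.num : ℚ) < 1 := by rw [hs]; exact hlt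
  have h2' : (0 : ℚ) ≤ (s.num : ℚ) := by rw [hs]; exact hge
  have hnum1 : s.num < 1 := by exact_mod_cast h1'
  have hnum0 : 0 ≤ s.num := by exact_mod_cast h2'
  have : s.num = 0 := by omega
  rw [← hs, this]; norm_num

lemma Ppar_half : Ppar 0 ((1 : ℚ) / 2) := by
  intro p hp hpd
  have h2 : ((1 : ℚ) / 2) = (1 : ℚ) / ((2 : ℕ) : ℚ) := by norm_num
  rw [h2] at hpd
  have : p ∣ 2 := hpd.trans (den_one_div_nat 2)
  have := (Nat.prime_dvd_prime_iff_eq hp Nat.prime_two).mp this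
  exact ⟨0, by rw [this, nthPrime_zero]⟩

lemma Ppar_third : Ppar 1 ((1 : ℚ) / 3) := by
  intro p hp hpd
  have h3 : ((1 : ℚ) / 3) = (1 : ℚ) / ((3 : ℕ) : ℚ) := by norm_num
  rw [h3] at hpd
  have : p ∣ 3 := hpd.trans (den_one_div_nat 3)
  have := (Nat.prime_dvd_prime_iff_eq hp Nat.prime_three).mp this
  exact ⟨0, by rw [this, nthPrime_one]⟩

theorem stmt7 :
    ((1 : ℚ) / 2 ∈ Mq ∧ (1 : ℚ) / 3 ∈ Mq) ∧
    ∀ d ∈ Mq, (∃ a ∈ Mq, (1 : ℚ) / 2 = d + a) → (∃ b ∈ Mq, (1 : ℚ) / 3 = d + b) →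
      d = 0 := by
  constructor
  · constructor
    · have hg : (1 : ℚ) / ((nthPrime 0 : ℚ) * (nthPrime 2 : ℚ)) ∈ Mq :=
        AddSubmonoid.subset_closure ⟨0, rfl⟩
      have h5 := nsmul_mem hg 5
      have : (5 : ℕ) • ((1 : ℚ) / ((nthPrime 0 : ℚ) * (nthPrime 2 : ℚ))) = 1 / 2 := by
        rw [nthPrime_zero, nthPrime_two]; norm_num
      rwa [this] at h5
    · have hg : (1 : ℚ) / ((nthPrime 1 : ℚ) * (nthPrime 3 : ℚ)) ∈ Mq :=
        AddSubmonoid.subset_closure ⟨1, rfl⟩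
      have h7 := nsmul_mem hg 7
      have : (7 : ℕ) • ((1 : ℚ) / ((nthPrime 1 : ℚ) * (nthPrime 3 : ℚ))) = 1 / 3 := by
        rw [nthPrime_one, nthPrime_three]; norm_num
      rwa [this] at h7
  · rintro d hd ⟨a, ha, h2⟩ ⟨b, hb, h3⟩
    obtain ⟨dE, dO, hdE0, hdE, hdO0, hdO, hdeq⟩ := Mq_decomp hd
    obtain ⟨aE, aO, haE0, haE, haO0, haO, haeq⟩ := Mq_decomp ha
    obtain ⟨bE, bO, hbE0, hbE, hbO0, hbO, hbeq⟩ := Mq_decomp hb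
    -- odd part of d vanishes, using 1/2 = d + a
    have hsum2 : (1 : ℚ) / 2 = (dE + aE) + (dO + aO) := by
      rw [h2, hdeq, haeq]; ring
    have hs : dO + aO = 1 / 2 + -(dE + aE) := by linarith
    have hsP0 : Ppar 0 (dO + aO) := by
      rw [hs]; exact Ppar_add Ppar_half (Ppar_neg (Ppar_add hdE haE))
    have hsP1 : Ppar 1 (dO + aO) := Ppar_add hdO haO
    have hsz : dO + aO = 0 :=
      Ppar_small_zero hsP0 hsP1 (by linarith) (by linarith)
    have hdOz : dO = 0 := by linarith
    -- even part of d vanishes, using 1/3 = d + b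
    have hsum3 : (1 : ℚ) / 3 = (dO + bO) + (dE + bE) := by
      rw [h3, hdeq, hbeq]; ring
    have hs' : dE + bE = 1 / 3 + -(dO + bO) := by linarith
    have hsP1' : Ppar 1 (dE + bE) := by
      rw [hs']; exact Ppar_add Ppar_third (Ppar_neg (Ppar_add hdO hbO))
    have hsP0' : Ppar 0 (dE + bE) := Ppar_add hdE hbE
    have hsz' : dE + bE = 0 :=
      Ppar_small_zero hsP0' hsP1' (by linarith) (by linarith)
    have hdEz : dE = 0 := by linarith
    rw [hdeq, hdOz, hdEz, add_zero]
end

section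
/- Let (pₙ) be the increasing enumeration of the primes with qₙ = pₙpₙ₊₂ and M = ⟨1/qₙ : n ∈ ℕ⟩. Then for every n ∈ ℕ, 1/pₙ₊₂ divides 1/pₙ in M; consequently the ascending chains of principal ideals (1/p₂ₙ₋₁ + M)ₙ and (1/p₂ₙ + M)ₙ starting at 1/2 + M and 1/3 + M respectively do not stabilize, so neither 1/2 nor 1/3 satisfies ACCP in M. -/
lemma nthPrime_pos (n : ℕ) : 0 < nthPrime n := (nthPrime_prime n).pos

lemma nthPrime_lt {m n : ℕ} (h : m < n) : nthPrime m < nthPrime n :=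
  (Nat.nth_lt_nth Nat.infinite_setOf_prime).2 h

lemma nthPrime_ne_zero (n : ℕ) : (nthPrime n : ℚ) ≠ 0 := by
  exact_mod_cast (nthPrime_pos n).ne'

lemma gen_mem (n : ℕ) : (1 : ℚ) / ((nthPrime n : ℚ) * (nthPrime (n + 2) : ℚ)) ∈ Mq :=
  AddSubmonoid.subset_closure ⟨n, rfl⟩

lemma inv_nthPrime_mem (n : ℕ) : (1 : ℚ) / (nthPrime n : ℚ) ∈ Mq := by
  have h := AddSubmonoid.nsmul_mem Mq (gen_mem n) (nthPrime (n + 2))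
  have : (nthPrime (n + 2)) • ((1 : ℚ) / ((nthPrime n : ℚ) * (nthPrime (n + 2) : ℚ)))
      = 1 / (nthPrime n : ℚ) := by
    have ha := nthPrime_ne_zero n
    have hb := nthPrime_ne_zero (n + 2)
    rw [nsmul_eq_mul]
    field_simp
  rwa [this] at h

lemma key_div (n : ℕ) : ∃ c ∈ Mq, (1 : ℚ) / (nthPrime n : ℚ) = 1 / (nthPrime (n + 2) : ℚ) + c := by
  set k := nthPrime (n + 2) - nthPrime n with hk
  refine ⟨k • ((1 : ℚ) / ((nthPrime n : ℚ) * (nthPrime (n + 2) : ℚ))),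
    AddSubmonoid.nsmul_mem Mq (gen_mem n) k, ?_⟩
  have hle : nthPrime n ≤ nthPrime (n + 2) := (nthPrime_lt (by omega)).le
  have hcast : (k : ℚ) = (nthPrime (n + 2) : ℚ) - (nthPrime n : ℚ) := by
    rw [hk]; push_cast [hle]; ring
  have ha := nthPrime_ne_zero n
  have hb := nthPrime_ne_zero (n + 2)
  rw [nsmul_eq_mul, hcast]
  field_simp
  ring

lemma Mq_nonneg {x : ℚ} (hx : x ∈ Mq) : 0 ≤ x := by
  induction hx using AddSubmonoid.closure_induction with
  | mem x hx =>
    obtain ⟨n, rfl⟩ := hx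
    positivity
  | zero => exact le_refl 0
  | add x y _ _ hx hy => exact add_nonneg hx hy

lemma coset_subset {a a' : ℚ} (c : ℚ) (hc : c ∈ Mq) (h : a = a' + c) :
    cosetQ Mq a ⊆ cosetQ Mq a' := by
  rintro x ⟨d, hd, rfl⟩
  exact ⟨c + d, Mq.add_mem hc hd, by rw [h]; ring⟩

lemma coset_ne {a a' : ℚ} (h : a ≠ a') : cosetQ Mq a ≠ cosetQ Mq a' := by
  intro heq
  have ha : a ∈ cosetQ Mq a' := heq ▸ ⟨0, Mq.zero_mem, by ring⟩
  have ha' : a' ∈ cosetQ Mq a := heq ▸ ⟨0, Mq.zero_mem, by ring⟩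
  obtain ⟨c, hc, hac⟩ := ha
  obtain ⟨c', hc', hac'⟩ := ha'
  have : c + c' = 0 := by
    have : a = a + (c' + c) := by rw [hac] at hac' ⊢; linarith
    linarith
  have hc0 : c = 0 := le_antisymm (by linarith [Mq_nonneg hc, Mq_nonneg hc']) (Mq_nonneg hc)
  exact h (by rw [hac, hc0, add_zero])

lemma inv_nthPrime_ne (m n : ℕ) (h : m < n) :
    (1 : ℚ) / (nthPrime m : ℚ) ≠ 1 / (nthPrime n : ℚ) := by
  have hlt : (nthPrime m : ℚ) < nthPrime n := by exact_mod_cast nthPrime_lt h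
  have h1 : (0 : ℚ) < nthPrime m := by exact_mod_cast nthPrime_pos m
  intro heq
  have := one_div_lt_one_div_of_lt h1 hlt
  rw [heq] at this
  exact lt_irrefl _ this

lemma chain_step (n : ℕ) :
    cosetQ Mq ((1 : ℚ) / (nthPrime n : ℚ)) ⊆ cosetQ Mq ((1 : ℚ) / (nthPrime (n + 2) : ℚ)) ∧
    cosetQ Mq ((1 : ℚ) / (nthPrime n : ℚ)) ≠ cosetQ Mq ((1 : ℚ) / (nthPrime (n + 2) : ℚ)) := by
  obtain ⟨c, hc, hac⟩ := key_div n
  exact ⟨coset_subset c hc hac, coset_ne (inv_nthPrime_ne n (n + 2) (by omega))⟩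

lemma not_accp (s : ℕ) : ¬ ACCPQat Mq ((1 : ℚ) / (nthPrime s : ℚ)) := by
  intro h
  obtain ⟨N, hN⟩ := h (fun n => (1 : ℚ) / (nthPrime (2 * n + s) : ℚ))
    (by norm_num) (fun n => inv_nthPrime_mem _)
    (fun n => by
      have := (chain_step (2 * n + s)).1
      convert this using 3 <;> ring_nf)
  have h1 := hN (N + 1) (by omega)
  have h2 := (chain_step (2 * N + s)).2
  have : 2 * (N + 1) + s = 2 * N + s + 2 := by ring
  rw [this] at h1
  exact h2 h1.symm

theorem stmt8 :
    (∀ n : ℕ, ∃ c ∈ Mq, (1 : ℚ) / (nthPrime n : ℚ) = 1 / (nthPrime (n + 2) : ℚ) + c) ∧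
    ((1 : ℚ) / 2 ∈ Mq ∧ (1 : ℚ) / 3 ∈ Mq) ∧
    (∀ n : ℕ, cosetQ Mq (1 / (nthPrime (2 * n) : ℚ)) ⊆
        cosetQ Mq (1 / (nthPrime (2 * (n + 1)) : ℚ)) ∧
      cosetQ Mq (1 / (nthPrime (2 * n) : ℚ)) ≠
        cosetQ Mq (1 / (nthPrime (2 * (n + 1)) : ℚ))) ∧
    (∀ n : ℕ, cosetQ Mq (1 / (nthPrime (2 * n + 1) : ℚ)) ⊆
        cosetQ Mq (1 / (nthPrime (2 * (n + 1) + 1) : ℚ)) ∧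
      cosetQ Mq (1 / (nthPrime (2 * n + 1) : ℚ)) ≠
        cosetQ Mq (1 / (nthPrime (2 * (n + 1) + 1) : ℚ))) ∧
    ¬ ACCPQat Mq ((1 : ℚ) / 2) ∧ ¬ ACCPQat Mq ((1 : ℚ) / 3) := by
  have h2 : (nthPrime 0 : ℚ) = 2 := by
    simp [nthPrime]
  have h3 : (nthPrime 1 : ℚ) = 3 := by
    simp [nthPrime]
  refine ⟨key_div, ⟨?_, ?_⟩, fun n => ?_, fun n => ?_, ?_, ?_⟩
  · have := inv_nthPrime_mem 0; rwa [h2] at this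
  · have := inv_nthPrime_mem 1; rwa [h3] at this
  · have := chain_step (2 * n)
    convert this using 4 <;> ring_nf
  · have := chain_step (2 * n + 1)
    convert this using 4 <;> ring_nf
  · have := not_accp 0; rwa [h2] at this
  · have := not_accp 1; rwa [h3] at this
end

section
/- The subring S = ℤ + X·ℚ[X] of ℚ[X] is not atomic: the element X cannot be written as a finite product of irreducible elements of S. -/
/-- The subring `S = ℤ + X·ℚ[X]` of `ℚ[X]`: polynomials with integer constant term. -/
noncomputable def ZplusXQX : Subring (Polynomial ℚ) :=
  Subring.comap (Polynomial.evalRingHom (0 : ℚ)) (Int.castRingHom ℚ).range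

lemma X_mem_ZplusXQX : (Polynomial.X : Polynomial ℚ) ∈ ZplusXQX := by
  refine ⟨0, ?_⟩
  simp

/-- Evaluation at 0 as a ring hom from S to ℚ. -/
noncomputable def evS : ZplusXQX →+* ℚ :=
  (Polynomial.evalRingHom (0 : ℚ)).comp ZplusXQX.subtype

/-- `S = ℤ + X·ℚ[X]` is not atomic: `X` is not a finite product of irreducibles of `S`. -/
theorem stmt9 :
    ¬ ∃ l : Multiset ZplusXQX, (∀ a ∈ l, Irreducible a) ∧
      l.prod = (⟨Polynomial.X, X_mem_ZplusXQX⟩ : ZplusXQX) := by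
  rintro ⟨l, hirr, hprod⟩
  -- evaluate at 0
  have hev : (l.map evS).prod = 0 := by
    rw [← map_multiset_prod, hprod]
    simp [evS]
  have hz : (0 : ℚ) ∈ l.map evS := Multiset.prod_eq_zero_iff.mp hev
  obtain ⟨a, ha, ha0'⟩ := Multiset.mem_map.mp hz
  have ha0 : Polynomial.eval 0 (a : Polynomial ℚ) = 0 := ha0'
  -- b = (1/2) * a is in S
  have hbmem : Polynomial.C (1/2 : ℚ) * (a : Polynomial ℚ) ∈ ZplusXQX := by
    refine ⟨0, ?_⟩
    simp [ha0]
  set b : ZplusXQX := ⟨Polynomial.C (1/2 : ℚ) * (a : Polynomial ℚ), hbmem⟩ with hb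
  have hfac : a = 2 * b := by
    apply Subtype.ext
    show (a : Polynomial ℚ) = (2 : Polynomial ℚ) * (Polynomial.C (1/2 : ℚ) * (a : Polynomial ℚ))
    rw [← mul_assoc, show (2 : Polynomial ℚ) = Polynomial.C 2 from rfl, ← Polynomial.C_mul]
    norm_num
  rcases (hirr a ha).isUnit_or_isUnit hfac with h2 | hbu
  · obtain ⟨v, hv⟩ := h2.exists_right_inv
    have := congrArg evS hv
    rw [map_mul, map_one] at this
    obtain ⟨n, hn⟩ := v.2
    have h2q : evS 2 = 2 := map_ofNat evS 2
    have hvn : evS v = (n : ℚ) := hn.symm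
    rw [h2q, hvn] at this
    have : (2 * n : ℤ) = 1 := by exact_mod_cast this
    omega
  · obtain ⟨v, hv⟩ := hbu.exists_right_inv
    have := congrArg evS hv
    rw [map_mul, map_one] at this
    have hb0 : evS b = 0 := by simp [evS, b, ha0]
    rw [hb0, zero_mul] at this
    exact zero_ne_one this
end

section
/- Let R be an integral domain and S a saturated multiplicative subset such that the extension R ⊆ R_S is inert. If R is a weak-ACCP domain, then the localization R_S is a weak-ACCP domain. -/
/-- `r` satisfies ACCP in `R`: every ascending chain of principal ideals
starting at `Rr` stabilizes. -/
def ACCPat {R : Type*} [CommRing R] (r : R) : Prop :=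
  ∀ f : ℕ → R, f 0 = r → (∀ n, f (n + 1) ∣ f n) →
    ∃ N, ∀ n, N ≤ n → Ideal.span {f n} = Ideal.span {f N}

/-- `R` is atomic: every nonzero nonunit is a finite product of irreducibles. -/
def AtomicDom (R : Type*) [CommRing R] : Prop :=
  ∀ r : R, r ≠ 0 → ¬ IsUnit r → ∃ l : Multiset R, (∀ a ∈ l, Irreducible a) ∧ l.prod = r

/-- `R` is weak-ACCP: atomic and every nonempty finite set of nonzero elements has a
common divisor `d` such that `s/d` satisfies ACCP for some `s` in the set. -/
def WeakACCPDom (R : Type*) [CommRing R] : Prop :=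
  AtomicDom R ∧ ∀ S : Finset R, S.Nonempty → (∀ s ∈ S, s ≠ (0 : R)) →
    ∃ d : R, (∀ s ∈ S, d ∣ s) ∧ ∃ s ∈ S, ∃ c, s = d * c ∧ ACCPat c

/-- Dependent choice along ℕ, keeping track of a predicate and a step relation. -/
lemma depChoice {α : Type*} (P : ℕ → α → Prop) (Rel : ℕ → α → α → Prop) (a0 : α)
    (h0 : P 0 a0)
    (step : ∀ n a, P n a → ∃ b, P (n + 1) b ∧ Rel n a b) :
    ∃ g : ℕ → α, g 0 = a0 ∧ (∀ n, P n (g n)) ∧ ∀ n, Rel n (g n) (g (n + 1)) := by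
  have step' : ∀ n (p : {a // P n a}), ∃ q : {a // P (n + 1) a}, Rel n p.1 q.1 := by
    intro n p
    obtain ⟨b, hb, hr⟩ := step n p.1 p.2
    exact ⟨⟨b, hb⟩, hr⟩
  let G : ∀ n, {a // P n a} := fun n =>
    Nat.rec ⟨a0, h0⟩ (fun n p => Classical.choose (step' n p)) n
  refine ⟨fun n => (G n).1, rfl, fun n => (G n).2, fun n => ?_⟩
  exact Classical.choose_spec (step' n (G n))

lemma isUnit_multiset_prod {M : Type*} [CommMonoid M] (s : Multiset M)
    (h : ∀ z ∈ s, IsUnit z) : IsUnit s.prod := by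
  induction s using Multiset.induction_on with
  | empty => simpa using isUnit_one
  | cons a s ih =>
    rw [Multiset.prod_cons]
    exact (h a (Multiset.mem_cons_self _ _)).mul
      (ih fun z hz => h z (Multiset.mem_cons_of_mem hz))

lemma accpat_of_associated {R : Type*} [CommRing R] [IsDomain R] {a b : R}
    (h : Associated a b) (ha : ACCPat a) : ACCPat b := by
  obtain ⟨u, hu⟩ := h
  intro f hf0 hd
  obtain ⟨N, hN⟩ := ha (fun n => f n * ↑u⁻¹)
    (by show f 0 * ↑u⁻¹ = a; rw [hf0, ← hu, mul_assoc]; simp)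
    (fun n => mul_dvd_mul_right (hd n) _)
  refine ⟨N, fun n hn => ?_⟩
  have h1 : ∀ m : ℕ, Ideal.span {f m * (↑u⁻¹ : R)} = Ideal.span {f m} := fun m =>
    Ideal.span_singleton_mul_right_unit (Units.isUnit _) _
  rw [← h1 n, ← h1 N]
  exact hN n hn

theorem stmt10 (R : Type*) [CommRing R] [IsDomain R] (S : Submonoid R)
    (h0 : (0 : R) ∉ S)
    (hsat : ∀ a b : R, a * b ∈ S → a ∈ S)
    (hinert : ∀ x y : Localization S, x ≠ 0 → y ≠ 0 →
      (∃ r : R, algebraMap R (Localization S) r = x * y) →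
      ∃ u : (Localization S)ˣ,
        (∃ r : R, algebraMap R (Localization S) r = (u : Localization S) * x) ∧
        (∃ r : R, algebraMap R (Localization S) r = ((u⁻¹ : (Localization S)ˣ) : Localization S) * y))
    (hR : WeakACCPDom R) :
    WeakACCPDom (Localization S) := by
  classical
  set L := Localization S with hL
  set φ := algebraMap R L with hφ
  have hle : S ≤ nonZeroDivisors R := fun s hs =>
    mem_nonZeroDivisors_of_ne_zero (fun h => h0 (h ▸ hs))
  haveI hdom : IsDomain L := IsLocalization.isDomain_of_le_nonZeroDivisors (S := L) hle
  have hinj : Function.Injective φ := IsLocalization.injective L hle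
  have hφ0 : ∀ r : R, r ≠ 0 → φ r ≠ 0 := by
    intro r hr h
    exact hr (hinj (by rw [h, map_zero]))
  -- every nonzero element of L is an associate of the image of a nonzero element of R
  have hassoc : ∀ x : L, x ≠ 0 → ∃ r : R, r ≠ 0 ∧ ∃ u : Lˣ, x = φ r * u := by
    intro x hx
    obtain ⟨⟨r, s⟩, hrs⟩ := IsLocalization.mk'_surjective S x
    have hu : IsUnit (φ (s : R)) := IsLocalization.map_units L s
    have hspec : x * φ (s : R) = φ r := by rw [← hrs]; exact IsLocalization.mk'_spec L r s
    have hr0 : r ≠ 0 := by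
      intro h
      apply hx
      have := hspec
      rw [h, map_zero] at this
      exact (mul_eq_zero.mp this).resolve_right hu.ne_zero
    refine ⟨r, hr0, hu.unit⁻¹, ?_⟩
    have : φ r * ↑hu.unit⁻¹ = x * φ (s : R) * ↑hu.unit⁻¹ := by rw [hspec]
    rw [this, mul_assoc]
    simp [IsUnit.unit_spec]
  -- images of irreducibles are units or irreducible, via inertness
  have hirr : ∀ a : R, Irreducible a → ¬ IsUnit (φ a) → Irreducible (φ a) := by
    intro a ha hnu
    refine ⟨hnu, fun b c hbc => ?_⟩
    have ha0 : a ≠ 0 := ha.ne_zero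
    have hb0 : b ≠ 0 := by rintro rfl; exact hφ0 a ha0 (by rw [hbc, zero_mul])
    have hc0 : c ≠ 0 := by rintro rfl; exact hφ0 a ha0 (by rw [hbc, mul_zero])
    obtain ⟨u, ⟨r1, hr1⟩, ⟨r2, hr2⟩⟩ := hinert b c hb0 hc0 ⟨a, hbc⟩
    have key : φ (r1 * r2) = φ a := by
      rw [map_mul, hr1, hr2, hbc, mul_mul_mul_comm]
      simp
    have : r1 * r2 = a := hinj key
    rcases ha.isUnit_or_isUnit this.symm with h | h
    · left
      have : b = ↑u⁻¹ * φ r1 := by rw [hr1, ← mul_assoc]; simp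
      rw [this]
      exact (Units.isUnit _).mul ((h.map φ))
    · right
      have : c = ↑u * φ r2 := by rw [hr2, ← mul_assoc]; simp
      rw [this]
      exact (Units.isUnit _).mul ((h.map φ))
  -- ACCP lifts along φ
  have haccp : ∀ c : R, c ≠ 0 → ACCPat c → ACCPat (φ c) := by
    intro c hc0 hacc f hf0 hdvd
    have hfne : ∀ n, f n ≠ 0 := by
      intro n
      induction n with
      | zero => rw [hf0]; exact hφ0 c hc0
      | succ n ih =>
        intro h
        obtain ⟨q, hq⟩ := hdvd n
        exact ih (by rw [hq, h, zero_mul])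
    obtain ⟨g, hg0, hgP, hgRel⟩ := depChoice
      (fun n (p : R × Lˣ) => f n = φ p.1 * ↑p.2)
      (fun _ p q => q.1 ∣ p.1) (c, 1)
      (by simpa using hf0)
      (by
        rintro n ⟨r, u⟩ hp
        obtain ⟨q, hq⟩ := hdvd n
        have hq0 : q ≠ 0 := by rintro rfl; exact hfne n (by rw [hq, mul_zero])
        have hqu0 : q * ↑u⁻¹ ≠ 0 := mul_ne_zero hq0 (Units.ne_zero _)
        have himg : ∃ r' : R, φ r' = f (n + 1) * (q * ↑u⁻¹) := by
          refine ⟨r, ?_⟩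
          have : φ r = f n * ↑u⁻¹ := by rw [hp, mul_assoc]; simp
          rw [this, hq, mul_assoc]
        obtain ⟨v, ⟨r1, hr1⟩, ⟨r2, hr2⟩⟩ := hinert (f (n + 1)) (q * ↑u⁻¹)
          (hfne (n + 1)) hqu0 himg
        refine ⟨(r1, v⁻¹), ?_, ?_⟩
        · show f (n + 1) = φ r1 * ↑v⁻¹
          rw [hr1, mul_comm (v : L), mul_assoc]; simp
        · show r1 ∣ r
          refine ⟨r2, hinj ?_⟩
          rw [map_mul, hr1, hr2]
          have : ↑v * f (n + 1) * (↑v⁻¹ * (q * ↑u⁻¹)) = f (n + 1) * q * ↑u⁻¹ := by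
            rw [mul_mul_mul_comm, Units.mul_inv, one_mul]
            ring
          rw [this, ← hq, hp, mul_assoc]
          simp)
    obtain ⟨N, hN⟩ := hacc (fun n => (g n).1) (by show (g 0).1 = c; rw [hg0]) hgRel
    refine ⟨N, fun n hn => ?_⟩
    have hA : Associated ((g n).1) ((g N).1) :=
      Ideal.span_singleton_eq_span_singleton.mp (hN n hn)
    have hA2 : Associated (φ (g n).1) (φ (g N).1) := hA.map φ
    have hfa : ∀ m, Associated (f m) (φ (g m).1) := by
      intro m
      exact ⟨(g m).2⁻¹, by rw [hgP m, mul_assoc]; simp⟩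
    exact Ideal.span_singleton_eq_span_singleton.mpr
      (((hfa n).trans hA2).trans (hfa N).symm)
  constructor
  · -- atomicity
    intro x hx0 hxu
    obtain ⟨r, hr0, u, hxr⟩ := hassoc x hx0
    have hru : ¬ IsUnit r := by
      intro h
      exact hxu (by rw [hxr]; exact (h.map φ).mul (Units.isUnit _))
    obtain ⟨l, hl, hlprod⟩ := hR.1 r hr0 hru
    set mu := (l.map φ).filter (fun z => IsUnit z) with hmu
    set m := (l.map φ).filter (fun z => ¬ IsUnit z) with hm
    have hsplit : mu + m = l.map φ := Multiset.filter_add_not _ _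
    have hmuu : IsUnit mu.prod := isUnit_multiset_prod _
      (fun z hz => (Multiset.mem_filter.mp hz).2)
    have hmirr : ∀ z ∈ m, Irreducible z := by
      intro z hz
      obtain ⟨hz1, hz2⟩ := Multiset.mem_filter.mp hz
      obtain ⟨a, hal, rfl⟩ := Multiset.mem_map.mp hz1
      exact hirr a (hl a hal) hz2
    have hprod : mu.prod * m.prod = φ r := by
      rw [← Multiset.prod_add, hsplit, Multiset.prod_hom l φ, hlprod]
    have hmne : m ≠ 0 := by
      intro h
      apply hxu
      rw [hxr, ← hprod, h]
      simp only [Multiset.prod_zero, mul_one]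
      exact hmuu.mul (Units.isUnit u)
    obtain ⟨z, hzm⟩ := Multiset.exists_mem_of_ne_zero hmne
    obtain ⟨m', hm'⟩ := Multiset.exists_cons_of_mem hzm
    have hcu : IsUnit ((↑u : L) * mu.prod) := (Units.isUnit u).mul hmuu
    obtain ⟨v, hv⟩ := hcu
    refine ⟨(↑v * z) ::ₘ m', ?_, ?_⟩
    · intro a haa
      rcases Multiset.mem_cons.mp haa with rfl | ham'
      · exact Associated.irreducible ⟨v, mul_comm z ↑v⟩ (hmirr z hzm)
      · exact hmirr _ (hm' ▸ Multiset.mem_cons_of_mem ham')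
    · have h1 : ((↑v * z) ::ₘ m').prod = ↑v * m.prod := by
        rw [Multiset.prod_cons, mul_assoc, ← Multiset.prod_cons, ← hm']
      rw [h1, hv, hxr, ← hprod]
      ring
  · -- weak ACCP condition
    intro T hTne hT0
    have hch : ∀ x : L, ∃ r : R, x ≠ 0 → r ≠ 0 ∧ ∃ u : Lˣ, x = φ r * u := by
      intro x
      by_cases hx : x = 0
      · exact ⟨1, fun h => absurd hx h⟩
      · obtain ⟨r, hr⟩ := hassoc x hx
        exact ⟨r, fun _ => hr⟩
    choose ρ hρ using hch
    set T' := T.image ρ with hT'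
    have hT'ne : T'.Nonempty := hTne.image ρ
    have hT'0 : ∀ s ∈ T', s ≠ (0 : R) := by
      intro s hs
      obtain ⟨x, hx, rfl⟩ := Finset.mem_image.mp hs
      exact (hρ x (hT0 x hx)).1
    obtain ⟨d, hd, s, hsT', c, hsdc, hacc⟩ := hR.2 T' hT'ne hT'0
    obtain ⟨x0, hx0T, rfl⟩ := Finset.mem_image.mp hsT'
    have hx00 : x0 ≠ 0 := hT0 x0 hx0T
    obtain ⟨hρ0, u0, hxu0⟩ := hρ x0 hx00
    have hc0 : c ≠ 0 := by rintro rfl; exact hρ0 (by rw [hsdc, mul_zero])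
    refine ⟨φ d, ?_, x0, hx0T, φ c * ↑u0, ?_, ?_⟩
    · intro x hx
      obtain ⟨hρx0, ux, hxux⟩ := hρ x (hT0 x hx)
      obtain ⟨e, he⟩ := hd (ρ x) (Finset.mem_image_of_mem ρ hx)
      exact ⟨φ e * ↑ux, by rw [hxux, he, map_mul, mul_assoc]⟩
    · rw [hxu0, hsdc, map_mul, mul_assoc]
    · exact accpat_of_associated ⟨u0, rfl⟩ (haccp c hc0 hacc)
end

section
/- Let (R_γ)_{γ∈Γ} be a directed family of integral domains (indexed by a nonempty directed poset) such that R_α ⊆ R_β is an inert extension whenever α ⪯ β. If each R_γ is a weak-ACCP domain, then the directed union ⋃_γ R_γ is a weak-ACCP domain. -/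
section Aux

variable {T : Type*} [CommRing T] [IsDomain T]
    {Γ : Type*} [Nonempty Γ] [Preorder Γ]
    (hdir : ∀ α β : Γ, ∃ θ : Γ, α ≤ θ ∧ β ≤ θ)
    (R : Γ → Subring T) (hmono : ∀ {α β : Γ}, α ≤ β → R α ≤ R β)
    (hinert : ∀ {α β : Γ}, α ≤ β → ∀ x y : T, x ∈ R β → y ∈ R β → x ≠ 0 → y ≠ 0 →
      x * y ∈ R α → ∃ u v : T, u ∈ R β ∧ v ∈ R β ∧ u * v = 1 ∧ u * x ∈ R α ∧ v * y ∈ R α)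
    (U : Subring T) (hU : (U : Set T) = ⋃ γ : Γ, (R γ : Set T))

include hU in
lemma aux_RleU (γ : Γ) : R γ ≤ U := by
  intro x hx
  have : x ∈ (U : Set T) := by
    rw [hU]; exact Set.mem_iUnion.2 ⟨γ, hx⟩
  exact this

include hU in
lemma aux_memU {x : T} (hx : x ∈ U) : ∃ γ : Γ, x ∈ R γ := by
  have : x ∈ (U : Set T) := hx
  rw [hU] at this
  exact Set.mem_iUnion.1 this

include hdir hmono hinert hU in
lemma aux_inert (γ : Γ) {x y : T} (hx : x ∈ U) (hy : y ∈ U) (hx0 : x ≠ 0) (hy0 : y ≠ 0)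
    (hxy : x * y ∈ R γ) :
    ∃ u v : T, u ∈ U ∧ v ∈ U ∧ u * v = 1 ∧ u * x ∈ R γ ∧ v * y ∈ R γ := by
  obtain ⟨α, hα⟩ := aux_memU R U hU hx
  obtain ⟨β, hβ⟩ := aux_memU R U hU hy
  obtain ⟨θ₁, hθ₁⟩ := hdir γ α
  obtain ⟨θ, hθa, hθb⟩ := hdir θ₁ β
  have hγθ : γ ≤ θ := le_trans hθ₁.1 hθa
  have hxθ : x ∈ R θ := hmono (le_trans hθ₁.2 hθa) hα
  have hyθ : y ∈ R θ := hmono hθb hβ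
  obtain ⟨u, v, hu, hv, huv, hux, hvy⟩ := hinert hγθ x y hxθ hyθ hx0 hy0 hxy
  exact ⟨u, v, aux_RleU R U hU θ hu, aux_RleU R U hU θ hv, huv, hux, hvy⟩

include hdir hmono hinert hU in
lemma aux_irr (γ : Γ) (a : T) (ha : a ∈ R γ)
    (hairr : Irreducible (⟨a, ha⟩ : R γ)) (haU : a ∈ U)
    (hnu : ¬ IsUnit (⟨a, haU⟩ : U)) : Irreducible (⟨a, haU⟩ : U) := by
  have ha0 : a ≠ 0 := by
    intro h
    exact hairr.ne_zero (Subtype.ext h)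
  refine ⟨hnu, ?_⟩
  rintro x y hxy
  have hxyT : a = (x : T) * (y : T) := congrArg Subtype.val hxy
  have hx0 : (x : T) ≠ 0 := by
    intro h; rw [h, zero_mul] at hxyT; exact ha0 hxyT
  have hy0 : (y : T) ≠ 0 := by
    intro h; rw [h, mul_zero] at hxyT; exact ha0 hxyT
  have hxyR : (x : T) * (y : T) ∈ R γ := hxyT ▸ ha
  obtain ⟨u, v, hu, hv, huv, hux, hvy⟩ :=
    aux_inert hdir R hmono hinert U hU γ x.2 y.2 hx0 hy0 hxyR
  have heq : (⟨a, ha⟩ : R γ) = ⟨u * x, hux⟩ * ⟨v * y, hvy⟩ := by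
    apply Subtype.ext
    show a = (u * x) * (v * y)
    have : (u * (x:T)) * (v * y) = (u * v) * (x * y) := by ring
    rw [this, huv, one_mul, hxyT]
  rcases hairr.isUnit_or_isUnit heq with h | h
  · left
    obtain ⟨w, hw⟩ := isUnit_iff_exists_inv.1 h
    have hwT : (u * (x : T)) * (w : T) = 1 := congrArg Subtype.val hw
    refine isUnit_iff_exists_inv.2 ⟨⟨u * (w : T), U.mul_mem hu (aux_RleU R U hU γ w.2)⟩, ?_⟩
    · apply Subtype.ext
      show (x : T) * (u * (w : T)) = 1
      rw [← hwT]; ring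
  · right
    obtain ⟨w, hw⟩ := isUnit_iff_exists_inv.1 h
    have hwT : (v * (y : T)) * (w : T) = 1 := congrArg Subtype.val hw
    refine isUnit_iff_exists_inv.2 ⟨⟨v * (w : T), U.mul_mem hv (aux_RleU R U hU γ w.2)⟩, ?_⟩
    · apply Subtype.ext
      show (y : T) * (v * (w : T)) = 1
      rw [← hwT]; ring

include hdir hmono hinert hU in
lemma aux_accp (γ : Γ) (c : T) (hc : c ∈ R γ) (hcU : c ∈ U) (hc0 : c ≠ 0)
    (hacc : ACCPat (⟨c, hc⟩ : R γ)) : ACCPat (⟨c, hcU⟩ : U) := by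
  intro f hf0 hstep
  -- all f n are nonzero
  have hfne : ∀ n, f n ≠ 0 := by
    intro n
    induction n with
    | zero =>
      rw [hf0]
      intro h
      exact hc0 (congrArg Subtype.val h)
    | succ m ih =>
      intro h
      obtain ⟨k, hk⟩ := hstep m
      rw [h, zero_mul] at hk
      exact ih hk
  -- key step
  have key : ∀ n (g : ↥U), (g : T) ∈ R γ → Associated g (f n) →
      ∃ g' : ↥U, (g' : T) ∈ R γ ∧ Associated g' (f (n + 1)) ∧
        ∃ k : T, k ∈ R γ ∧ (g : T) = (g' : T) * k := by
    intro n g hgR hgassoc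
    obtain ⟨w, hw⟩ := hstep n
    obtain ⟨un, hun⟩ := hgassoc
    have hg0 : g ≠ 0 := by
      intro h
      rw [h, zero_mul] at hun
      exact hfne n hun.symm
    set w' : ↥U := w * (↑un⁻¹ : ↥U) with hw'def
    have hgw : g = f (n + 1) * w' := by
      have h1 : g = f n * (↑un⁻¹ : ↥U) := by
        rw [← hun]
        rw [mul_assoc]
        simp
      rw [h1, hw, hw'def]
      ring
    have hgwT0 : (g : T) = ((f (n + 1)) : T) * (w' : T) := by rw [hgw]; rfl
    have hw'0 : (w' : T) ≠ 0 := by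
      intro h
      apply hg0
      apply Subtype.ext
      rw [hgwT0, h, mul_zero]; rfl
    have hfn10 : ((f (n + 1)) : T) ≠ 0 := by
      intro h
      exact hfne (n + 1) (Subtype.ext h)
    have hgwT : (g : T) = ((f (n + 1)) : T) * (w' : T) := by rw [hgw]; rfl
    have hprodR : ((f (n + 1)) : T) * (w' : T) ∈ R γ := by rw [← hgwT]; exact hgR
    obtain ⟨u, v, hu, hv, huv, hux, hvy⟩ :=
      aux_inert hdir R hmono hinert U hU γ (f (n + 1)).2 w'.2 hfn10 hw'0 hprodR
    have huU : IsUnit (⟨u, hu⟩ : ↥U) := by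
      refine isUnit_iff_exists_inv.2 ⟨⟨v, hv⟩, ?_⟩
      exact Subtype.ext huv
    refine ⟨⟨u, hu⟩ * f (n + 1), hux, ?_, v * (w' : T), hvy, ?_⟩
    · exact associated_unit_mul_left _ _ huU
    · rw [hgwT]
      show ((f (n+1)) : T) * (w' : T) = (u * ((f (n+1)) : T)) * (v * (w' : T))
      have h2 : (u * ((f (n+1)) : T)) * (v * (w' : T)) = (u * v) * (((f (n+1)) : T) * w') := by
        ring
      rw [h2, huv, one_mul]
  classical
  choose g' hg'R hg'assoc k hkR hkeq using key
  -- build the chain in R γ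
  have hassoc0 : Associated (⟨c, hcU⟩ : ↥U) (f 0) := by rw [hf0]
  let G : (n : ℕ) → {g : ↥U // (g : T) ∈ R γ ∧ Associated g (f n)} := fun n =>
    Nat.rec (motive := fun n => {g : ↥U // (g : T) ∈ R γ ∧ Associated g (f n)})
      ⟨⟨c, hcU⟩, hc, hassoc0⟩
      (fun m p => ⟨g' m p.1 p.2.1 p.2.2, hg'R m p.1 p.2.1 p.2.2, hg'assoc m p.1 p.2.1 p.2.2⟩) n
  have hGdvd : ∀ n, ∃ kk : T, kk ∈ R γ ∧ ((G n).1 : T) = ((G (n+1)).1 : T) * kk := by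
    intro n
    exact ⟨k n (G n).1 (G n).2.1 (G n).2.2, hkR n (G n).1 (G n).2.1 (G n).2.2,
      hkeq n (G n).1 (G n).2.1 (G n).2.2⟩
  let F : ℕ → ↥(R γ) := fun n => ⟨((G n).1 : T), (G n).2.1⟩
  have hF0 : F 0 = ⟨c, hc⟩ := rfl
  have hFdvd : ∀ n, F (n + 1) ∣ F n := by
    intro n
    obtain ⟨kk, hkk, hkkeq⟩ := hGdvd n
    exact ⟨⟨kk, hkk⟩, Subtype.ext hkkeq⟩
  obtain ⟨N, hN⟩ := hacc F hF0 hFdvd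
  refine ⟨N, fun n hn => ?_⟩
  have hspan := hN n hn
  have h1 : F N ∣ F n := Ideal.span_singleton_le_span_singleton.1 (le_of_eq hspan)
  have h2 : F n ∣ F N := Ideal.span_singleton_le_span_singleton.1 (le_of_eq hspan.symm)
  -- transfer divisibility to U
  have hdvdU : ∀ {m₁ m₂ : ℕ}, F m₁ ∣ F m₂ → (G m₁).1 ∣ (G m₂).1 := by
    intro m₁ m₂ ⟨e, he⟩
    have heT : ((G m₂).1 : T) = ((G m₁).1 : T) * (e : T) := congrArg Subtype.val he
    refine ⟨⟨(e : T), aux_RleU R U hU γ e.2⟩, ?_⟩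
    exact Subtype.ext heT
  have hd1 : f N ∣ f n :=
    ((G N).2.2.symm.dvd).trans ((hdvdU h1).trans ((G n).2.2.dvd))
  have hd2 : f n ∣ f N :=
    ((G n).2.2.symm.dvd).trans ((hdvdU h2).trans ((G N).2.2.dvd))
  exact le_antisymm (Ideal.span_singleton_le_span_singleton.2 hd1)
    (Ideal.span_singleton_le_span_singleton.2 hd2)

end Aux

theorem stmt11 {T : Type*} [CommRing T] [IsDomain T]
    {Γ : Type*} [Nonempty Γ] [Preorder Γ]
    (hdir : ∀ α β : Γ, ∃ θ : Γ, α ≤ θ ∧ β ≤ θ)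
    (R : Γ → Subring T) (hmono : ∀ {α β : Γ}, α ≤ β → R α ≤ R β)
    -- each extension `R α ⊆ R β` is inert
    (hinert : ∀ {α β : Γ}, α ≤ β → ∀ x y : T, x ∈ R β → y ∈ R β → x ≠ 0 → y ≠ 0 →
      x * y ∈ R α → ∃ u v : T, u ∈ R β ∧ v ∈ R β ∧ u * v = 1 ∧ u * x ∈ R α ∧ v * y ∈ R α)
    (hwa : ∀ γ : Γ, WeakACCPDom (R γ))
    (U : Subring T) (hU : (U : Set T) = ⋃ γ : Γ, (R γ : Set T)) :
    WeakACCPDom U := by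
  classical
  haveI : IsDirected Γ (· ≤ ·) := ⟨hdir⟩
  constructor
  · -- Atomicity
    intro r hr0 hru
    obtain ⟨γ, hrγ⟩ := aux_memU R U hU r.2
    have hr0T : (r : T) ≠ 0 := fun h => hr0 (Subtype.ext h)
    have hr'0 : (⟨(r : T), hrγ⟩ : ↥(R γ)) ≠ 0 := fun h => hr0T (congrArg Subtype.val h)
    have hr'u : ¬ IsUnit (⟨(r : T), hrγ⟩ : ↥(R γ)) := by
      intro h
      obtain ⟨w, hw⟩ := isUnit_iff_exists_inv.1 h
      apply hru
      have hwT : (r : T) * (w : T) = 1 := congrArg Subtype.val hw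
      refine isUnit_iff_exists_inv.2 ⟨⟨(w : T), aux_RleU R U hU γ w.2⟩, ?_⟩
      exact Subtype.ext hwT
    obtain ⟨l, hlirr, hlprod⟩ := (hwa γ).1 ⟨(r : T), hrγ⟩ hr'0 hr'u
    let ι : ↥(R γ) →+* ↥U := Subring.inclusion (aux_RleU R U hU γ)
    let l' : Multiset ↥U := l.map ι
    have hl'prod : l'.prod = r := by
      show (l.map ι).prod = r
      rw [Multiset.prod_hom l ι, hlprod]
      rfl
    -- each element of l' is nonzero and either a unit of U or irreducible in U
    have hl'irr : ∀ a ∈ l', ¬ IsUnit a → Irreducible a := by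
      intro a ha hanu
      obtain ⟨a₀, ha₀, rfl⟩ := Multiset.mem_map.1 ha
      have h1 : Irreducible (⟨(a₀ : T), a₀.2⟩ : ↥(R γ)) := by
        have : (⟨(a₀ : T), a₀.2⟩ : ↥(R γ)) = a₀ := rfl
        rw [this]; exact hlirr a₀ ha₀
      have h2 : ι a₀ = (⟨(a₀ : T), aux_RleU R U hU γ a₀.2⟩ : ↥U) := rfl
      rw [h2] at hanu ⊢
      exact aux_irr hdir R hmono hinert U hU γ (a₀ : T) a₀.2 h1 _ hanu
    let l₂ : Multiset ↥U := l'.filter (fun a => ¬ IsUnit a)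
    let l₁ : Multiset ↥U := l'.filter (fun a => IsUnit a)
    have hsplit : l₁ + l₂ = l' := Multiset.filter_add_not _ _
    have hu1 : IsUnit l₁.prod := by
      have : ∀ a ∈ l₁, IsUnit a := fun a ha => (Multiset.mem_filter.1 ha).2
      clear_value l₁
      clear hsplit
      induction l₁ using Multiset.induction with
      | empty => simp
      | cons b t ih =>
        rw [Multiset.prod_cons]
        exact (this b (Multiset.mem_cons_self ..)).mul
          (ih (fun x hx => this x (Multiset.mem_cons_of_mem hx)))
    have hl₂ne : l₂ ≠ 0 := by
      intro h
      apply hru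
      rw [← hl'prod, ← hsplit, Multiset.prod_add, h, Multiset.prod_zero, mul_one]
      exact hu1
    obtain ⟨b, hb⟩ := Multiset.exists_mem_of_ne_zero hl₂ne
    obtain ⟨t, ht⟩ := Multiset.exists_cons_of_mem hb
    refine ⟨(l₁.prod * b) ::ₘ t, ?_, ?_⟩
    · intro a ha
      rcases Multiset.mem_cons.1 ha with h | h
      · subst h
        exact (irreducible_isUnit_mul hu1).2
          (hl'irr b (Multiset.mem_of_mem_filter hb) (Multiset.mem_filter.1 hb).2)
      · have hbt : a ∈ l₂ := ht ▸ Multiset.mem_cons_of_mem h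
        exact hl'irr a (Multiset.mem_of_mem_filter hbt) (Multiset.mem_filter.1 hbt).2
    · rw [Multiset.prod_cons, mul_assoc, ← Multiset.prod_cons, ← ht, ← Multiset.prod_add,
        hsplit, hl'prod]
  · -- weak GCD condition
    intro S hSne hS0
    -- find a common index
    have hmem : ∀ s : {x // x ∈ S}, ∃ γ : Γ, ((s : ↥U) : T) ∈ R γ :=
      fun s => aux_memU R U hU (s : ↥U).2
    choose gi hgi using hmem
    obtain ⟨γ, hγ⟩ := Finset.exists_le (S.attach.image gi)
    have hSR : ∀ s : {x // x ∈ S}, ((s : ↥U) : T) ∈ R γ := by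
      intro s
      exact hmono (hγ (gi s) (Finset.mem_image_of_mem gi (Finset.mem_attach S s))) (hgi s)
    let emb : {x // x ∈ S} ↪ ↥(R γ) :=
      ⟨fun s => ⟨((s : ↥U) : T), hSR s⟩, by
        intro a b h
        have h2 := congrArg Subtype.val h
        exact Subtype.ext (Subtype.ext h2)⟩
    let S₀ : Finset ↥(R γ) := S.attach.map emb
    have hS₀ne : S₀.Nonempty := Finset.Nonempty.map (Finset.attach_nonempty_iff.2 hSne)
    have hS₀0 : ∀ s ∈ S₀, s ≠ (0 : ↥(R γ)) := by
      intro s hs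
      obtain ⟨a, _, rfl⟩ := Finset.mem_map.1 hs
      intro h
      have h2 : ((a : ↥U) : T) = 0 := congrArg Subtype.val h
      exact hS0 (a : ↥U) a.2 (Subtype.ext h2)
    obtain ⟨d₀, hd₀, s₀, hs₀mem, c₀, hseq, hacc⟩ := (hwa γ).2 S₀ hS₀ne hS₀0
    obtain ⟨a, _, rfl⟩ := Finset.mem_map.1 hs₀mem
    refine ⟨⟨(d₀ : T), aux_RleU R U hU γ d₀.2⟩, ?_, (a : ↥U), a.2, ⟨(c₀ : T),
      aux_RleU R U hU γ c₀.2⟩, ?_, ?_⟩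
    · intro s hs
      obtain ⟨e, he⟩ := hd₀ (emb ⟨s, hs⟩) (Finset.mem_map_of_mem emb (Finset.mem_attach S ⟨s, hs⟩))
      have heT : ((s : ↥U) : T) = (d₀ : T) * (e : T) := congrArg Subtype.val he
      refine ⟨⟨(e : T), aux_RleU R U hU γ e.2⟩, ?_⟩
      exact Subtype.ext heT
    · have hseqT : (((a : ↥U)) : T) = (d₀ : T) * (c₀ : T) := congrArg Subtype.val hseq
      exact Subtype.ext hseqT
    · have hc0 : (c₀ : T) ≠ 0 := by
        intro h
        apply hS0 (a : ↥U) a.2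
        apply Subtype.ext
        have := congrArg Subtype.val hseq
        rw [show ((a : ↥U) : T) = (emb a : T) from rfl, this]
        show (d₀ : T) * (c₀ : T) = 0
        rw [h, mul_zero]
      have hacc' : ACCPat (⟨(c₀ : T), c₀.2⟩ : ↥(R γ)) := hacc
      exact aux_accp hdir R hmono hinert U hU γ (c₀ : T) c₀.2 _ hc0 hacc'
end

section
/- For an integral domain R, R is a weak-ACCP domain if and only if the polynomial ring R[X] is a weak-ACCP domain. -/
section Helpers

open Polynomial

variable {A : Type*} [CommRing A] [IsDomain A]

lemma chain_dvd_le {f : ℕ → A} (hc : ∀ n, f (n + 1) ∣ f n) {m n : ℕ} (h : m ≤ n) :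
    f n ∣ f m := by
  induction n, h using Nat.le_induction with
  | base => exact dvd_rfl
  | succ n hmn ih => exact (hc n).trans ih

/-- Every ACCP element (nonzero, nonunit) factors into irreducibles. -/
lemma accp_atomic {x : A} (hx : ACCPat x) (h0 : x ≠ 0) (hu : ¬IsUnit x) :
    ∃ l : Multiset A, (∀ a ∈ l, Irreducible a) ∧ l.prod = x := by
  by_contra hbad
  set Bad : A → Prop := fun y => y ≠ 0 ∧ ¬IsUnit y ∧
      ¬∃ l : Multiset A, (∀ a ∈ l, Irreducible a) ∧ l.prod = y with hBadDef
  have hstep : ∀ y, Bad y → ∃ z, Bad z ∧ ∃ w, ¬IsUnit w ∧ y = z * w := by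
    rintro y ⟨hy0, hyu, hyl⟩
    have hnirr : ¬Irreducible y := by
      intro h
      exact hyl ⟨{y}, by simpa using h, by simp⟩
    rw [irreducible_iff] at hnirr
    push_neg at hnirr
    obtain ⟨a, b, hab, hau, hbu⟩ := hnirr hyu
    have ha0 : a ≠ 0 := by rintro rfl; exact hy0 (by simp [hab])
    have hb0 : b ≠ 0 := by rintro rfl; exact hy0 (by simp [hab])
    by_cases hA : Bad a
    · exact ⟨a, hA, b, hbu, hab⟩
    by_cases hB : Bad b
    · exact ⟨b, hB, a, hau, by rw [hab, mul_comm]⟩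
    exfalso
    simp only [hBadDef, not_and, not_not] at hA hB
    obtain ⟨la, hla, hlap⟩ := hA ha0 hau
    obtain ⟨lb, hlb, hlbp⟩ := hB hb0 hbu
    refine hyl ⟨la + lb, ?_, by rw [Multiset.prod_add, hlap, hlbp, hab]⟩
    intro c hc
    rcases Multiset.mem_add.mp hc with h | h
    · exact hla c h
    · exact hlb c h
  have hxBad : Bad x := ⟨h0, hu, hbad⟩
  let g : ℕ → {y : A // Bad y} := fun n =>
    Nat.rec ⟨x, hxBad⟩ (fun _ p => ⟨Classical.choose (hstep p.1 p.2),
      (Classical.choose_spec (hstep p.1 p.2)).1⟩) n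
  have hgchain : ∀ n, ∃ w, ¬IsUnit w ∧ (g n).1 = (g (n + 1)).1 * w := by
    intro n
    exact (Classical.choose_spec (hstep (g n).1 (g n).2)).2
  have hchain : ∀ n, (fun n => (g n).1) (n + 1) ∣ (fun n => (g n).1) n := by
    intro n
    obtain ⟨w, _, hw⟩ := hgchain n
    exact ⟨w, hw⟩
  obtain ⟨N, hN⟩ := hx (fun n => (g n).1) rfl hchain
  have hassoc : Associated ((g (N + 1)).1) ((g N).1) :=
    Ideal.span_singleton_eq_span_singleton.mp (hN (N + 1) (Nat.le_succ N))
  obtain ⟨u, hu'⟩ := hassoc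
  obtain ⟨w, hwu, hw⟩ := hgchain N
  have hne : (g (N + 1)).1 ≠ 0 := (g (N + 1)).2.1
  have : (u : A) = w := by
    apply mul_left_cancel₀ hne
    rw [hu', hw]
  exact hwu (this ▸ u.isUnit)

end Helpers

section PolyHelpers

open Polynomial

variable {R : Type*} [CommRing R] [IsDomain R]

/-- Key lemma: if some nonzero coefficient of `g` is an ACCP element of `R`,
then `g` is an ACCP element of `R[X]`. -/
lemma accp_poly_of_coeff {g : R[X]} {j : ℕ}
    (h0 : g.coeff j ≠ 0) (hA : ACCPat (g.coeff j)) : ACCPat g := by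
  intro f hf0 hchain
  have hg : g ≠ 0 := fun h => h0 (by simp [h])
  have hdvd : ∀ m n : ℕ, m ≤ n → f n ∣ f m := fun m n h => chain_dvd_le hchain h
  have hfz : ∀ n, f n ≠ 0 := by
    intro n hn
    have hd : f n ∣ g := hf0 ▸ hdvd 0 n (Nat.zero_le n)
    rw [hn] at hd
    exact hg (zero_dvd_iff.mp hd)
  -- minimal degree
  have hne : (Set.range fun n => (f n).natDegree).Nonempty := ⟨_, ⟨0, rfl⟩⟩
  obtain ⟨M, hM⟩ := Nat.sInf_mem hne
  have hmin : ∀ n, (f M).natDegree ≤ (f n).natDegree := by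
    intro n
    have hM' : (f M).natDegree = sInf (Set.range fun n => (f n).natDegree) := hM
    rw [hM']
    exact Nat.sInf_le ⟨n, rfl⟩
  -- constant cofactors
  have hW : ∀ n : ℕ, ∃ u : R, f M = f (M + n) * Polynomial.C u := by
    intro n
    obtain ⟨w, hw⟩ := hdvd M (M + n) (Nat.le_add_right M n)
    have hw0 : w ≠ 0 := by
      rintro rfl
      exact hfz M (by simpa using hw)
    have hdeg : (f M).natDegree = (f (M + n)).natDegree + w.natDegree := by
      rw [hw, Polynomial.natDegree_mul (hfz (M + n)) hw0]
    have hdegw : w.natDegree = 0 := by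
      have := hmin (M + n)
      omega
    refine ⟨w.coeff 0, ?_⟩
    rw [hw]
    congr 1
    exact Polynomial.eq_C_of_natDegree_eq_zero hdegw
  set u : ℕ → R := fun n => Classical.choose (hW n) with hu
  have hu' : ∀ n, f M = f (M + n) * Polynomial.C (u n) :=
    fun n => Classical.choose_spec (hW n)
  have hu0 : ∀ n, u n ≠ 0 := by
    intro n h
    apply hfz M
    rw [hu' n, h, map_zero, mul_zero]
  -- u n divides c₀ := g.coeff j
  have hudvd : ∀ n, u n ∣ g.coeff j := by
    intro n
    have h1 : Polynomial.C (u n) ∣ f M := Dvd.intro_left _ (hu' n).symm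
    have h2 : f M ∣ g := hf0 ▸ hdvd 0 M (Nat.zero_le M)
    exact (Polynomial.C_dvd_iff_dvd_coeff (u n) g).mp (h1.trans h2) j
  set t : ℕ → R := fun n => Classical.choose (hudvd n) with htdef
  have ht : ∀ n, g.coeff j = u n * t n := fun n => Classical.choose_spec (hudvd n)
  have ht0 : ∀ n, t n ≠ 0 := by
    intro n h
    exact h0 (by rw [ht n, h, mul_zero])
  have htchain : ∀ n, t (n + 1) ∣ t n := by
    intro n
    -- u (n+1) = e * u n where f (M+n) = f (M+n+1) * C e-ish
    obtain ⟨e, he⟩ := hchain (M + n)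
    have heq : f M = f (M + (n + 1)) * (e * Polynomial.C (u n)) := by
      rw [← mul_assoc, show M + (n + 1) = M + n + 1 from rfl, ← he]
      exact hu' n
    have h2 : f (M + (n + 1)) * Polynomial.C (u (n + 1)) =
        f (M + (n + 1)) * (e * Polynomial.C (u n)) := by rw [← hu' (n + 1), heq]
    have h3 : Polynomial.C (u (n + 1)) = e * Polynomial.C (u n) :=
      mul_left_cancel₀ (hfz _) h2
    -- e is a constant
    have he0 : e ≠ 0 := by
      rintro rfl
      simp only [zero_mul] at h3
      exact hu0 (n + 1) (by simpa using congrArg (fun p => Polynomial.coeff p 0) h3)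
    have hedeg : e.natDegree = 0 := by
      have := congrArg Polynomial.natDegree h3
      rw [Polynomial.natDegree_mul he0 (fun hh => hu0 n (by simpa using hh))] at this
      simp only [Polynomial.natDegree_C] at this
      omega
    have hee : e = Polynomial.C (e.coeff 0) := Polynomial.eq_C_of_natDegree_eq_zero hedeg
    have hunn : u (n + 1) = e.coeff 0 * u n := by
      apply Polynomial.C_injective
      rw [map_mul, ← hee, h3]
    refine ⟨e.coeff 0, mul_left_cancel₀ (hu0 (n + 1)) ?_⟩
    calc u (n + 1) * t n = e.coeff 0 * (u n * t n) := by rw [hunn]; ring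
      _ = e.coeff 0 * (u (n + 1) * t (n + 1)) := by rw [← ht n, ← ht (n + 1)]
      _ = u (n + 1) * (t (n + 1) * e.coeff 0) := by ring
  -- build the chain starting at g.coeff j
  set s : ℕ → R := fun k => Nat.rec (g.coeff j) (fun i _ => t i) k with hs
  have hschain : ∀ k, s (k + 1) ∣ s k := by
    intro k
    cases k with
    | zero =>
      show t 0 ∣ g.coeff j
      exact ⟨u 0, by rw [ht 0]; ring⟩
    | succ k => exact htchain k
  obtain ⟨N, hN⟩ := hA s rfl hschain
  refine ⟨M + N, fun n hn => ?_⟩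
  have hnM : M ≤ n := le_trans (Nat.le_add_right M N) hn
  obtain ⟨k, rfl⟩ : ∃ k, n = M + k := ⟨n - M, by omega⟩
  have hkN : N ≤ k := by omega
  have h1 : Ideal.span {t k} = Ideal.span {t N} := by
    have e1 := hN (k + 1) (by omega)
    have e2 := hN (N + 1) (by omega)
    have : s (k + 1) = t k := rfl
    rw [show s (k + 1) = t k from rfl] at e1
    rw [show s (N + 1) = t N from rfl] at e2
    rw [e1, ← e2]
  obtain ⟨v, hv⟩ := Ideal.span_singleton_eq_span_singleton.mp h1
  -- u k = u N * v
  have h2 : u k = u N * (v : R) := by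
    apply mul_right_cancel₀ (ht0 k)
    calc u k * t k = u N * t N := by rw [← ht k, ← ht N]
      _ = u N * (t k * (v : R)) := by rw [hv]
      _ = u N * (v : R) * t k := by ring
  have h3 : f (M + N) = f (M + k) * Polynomial.C (v : R) := by
    apply mul_right_cancel₀ (show Polynomial.C (u N) ≠ 0 from fun hh =>
      hu0 N (by simpa using hh))
    rw [← hu' N, hu' k, h2, map_mul]
    ring
  rw [Ideal.span_singleton_eq_span_singleton]
  exact ⟨(Polynomial.isUnit_C.mpr v.isUnit).unit, by
    rw [IsUnit.unit_spec]; exact h3.symm⟩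

lemma accp_of_accp_C {c : R} (h : ACCPat (Polynomial.C c)) : ACCPat c := by
  intro f hf0 hc
  obtain ⟨N, hN⟩ := h (fun n => Polynomial.C (f n)) (by show Polynomial.C (f 0) = _; rw [hf0])
    (fun n => map_dvd Polynomial.C (hc n))
  refine ⟨N, fun n hn => ?_⟩
  have hassoc := Ideal.span_singleton_eq_span_singleton.mp (hN n hn)
  obtain ⟨w, hw⟩ := hassoc
  obtain ⟨r, hr, hCr⟩ := Polynomial.isUnit_iff.mp w.isUnit
  rw [Ideal.span_singleton_eq_span_singleton]
  refine ⟨hr.unit, ?_⟩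
  apply Polynomial.C_injective
  rw [map_mul]
  simp only [IsUnit.unit_spec]
  rw [hCr, hw]

lemma irreducible_C_iff {a : R} : Irreducible (Polynomial.C a) ↔ Irreducible a := by
  constructor
  · intro h
    constructor
    · intro hu
      exact h.not_isUnit (Polynomial.isUnit_C.mpr hu)
    · intro x y hxy
      have := h.isUnit_or_isUnit (by rw [hxy, map_mul])
      rcases this with h' | h'
      · exact Or.inl (Polynomial.isUnit_C.mp h')
      · exact Or.inr (Polynomial.isUnit_C.mp h')
  · intro h
    constructor
    · intro hu
      exact h.not_isUnit (Polynomial.isUnit_C.mp hu)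
    · intro x y hxy
      have hx0 : x ≠ 0 := by
        rintro rfl
        rw [zero_mul] at hxy
        exact h.ne_zero (Polynomial.C_eq_zero.mp hxy)
      have hy0 : y ≠ 0 := by
        rintro rfl
        rw [mul_zero] at hxy
        exact h.ne_zero (Polynomial.C_eq_zero.mp hxy)
      have hdeg : x.natDegree = 0 ∧ y.natDegree = 0 := by
        have := congrArg Polynomial.natDegree hxy
        rw [Polynomial.natDegree_C, Polynomial.natDegree_mul hx0 hy0] at this
        omega
      have hx := Polynomial.eq_C_of_natDegree_eq_zero hdeg.1
      have hy := Polynomial.eq_C_of_natDegree_eq_zero hdeg.2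
      have : a = x.coeff 0 * y.coeff 0 := by
        apply Polynomial.C_injective
        rw [map_mul, ← hx, ← hy, hxy]
      rcases h.isUnit_or_isUnit this with h' | h'
      · exact Or.inl (hx ▸ Polynomial.isUnit_C.mpr h')
      · exact Or.inr (hy ▸ Polynomial.isUnit_C.mpr h')

/-- Multiply a factorization by a unit. -/
lemma factor_unit_mul {A : Type*} [CommRing A] [IsDomain A] {u y : A} (hu : IsUnit u)
    {l : Multiset A} (hl : ∀ a ∈ l, Irreducible a) (hp : l.prod = y) (hne : l ≠ 0) :
    ∃ l' : Multiset A, (∀ a ∈ l', Irreducible a) ∧ l'.prod = u * y := by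
  obtain ⟨a, ha⟩ := Multiset.exists_mem_of_ne_zero hne
  obtain ⟨tl, rfl⟩ := Multiset.exists_cons_of_mem ha
  refine ⟨(u * a) ::ₘ tl, ?_, ?_⟩
  · intro b hb
    rcases Multiset.mem_cons.mp hb with h | h
    · subst h
      have : Associated a (u * a) := ⟨hu.unit, by rw [IsUnit.unit_spec]; ring⟩
      exact this.irreducible (hl a (Multiset.mem_cons_self _ _))
    · exact hl b (Multiset.mem_cons_of_mem h)
  · rw [Multiset.prod_cons, ← hp, Multiset.prod_cons]
    ring

/-- The key application of the weak ACCP property of `R` to the coefficients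
of a finite set of polynomials. -/
lemma forward_common
    (h2 : ∀ S : Finset R, S.Nonempty → (∀ s ∈ S, s ≠ (0 : R)) →
      ∃ d : R, (∀ s ∈ S, d ∣ s) ∧ ∃ s ∈ S, ∃ c, s = d * c ∧ ACCPat c)
    (T : Finset R[X]) (hne : T.Nonempty) (h0 : ∀ t ∈ T, t ≠ 0) :
    ∃ d : R, (∀ t ∈ T, Polynomial.C d ∣ t) ∧
      ∃ t ∈ T, ∃ g : R[X], t = Polynomial.C d * g ∧ ACCPat g := by
  classical
  set B : Finset R := T.biUnion (fun t => t.support.image t.coeff) with hB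
  have hmemB : ∀ b, b ∈ B ↔ ∃ t ∈ T, ∃ j ∈ t.support, t.coeff j = b := by
    intro b
    simp [hB, Finset.mem_biUnion, Finset.mem_image]
  have hBne : B.Nonempty := by
    obtain ⟨t₀, ht₀⟩ := hne
    obtain ⟨j, hj⟩ := Polynomial.support_nonempty.mpr (h0 t₀ ht₀)
    exact ⟨t₀.coeff j, (hmemB _).mpr ⟨t₀, ht₀, j, hj, rfl⟩⟩
  have hB0 : ∀ b ∈ B, b ≠ (0 : R) := by
    intro b hb
    obtain ⟨t, _, j, hj, rfl⟩ := (hmemB b).mp hb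
    exact Polynomial.mem_support_iff.mp hj
  obtain ⟨d, hd, b₀, hb₀, c₀, hbc, hacc⟩ := h2 B hBne hB0
  obtain ⟨t₀, ht₀T, j, hj, hcoeff⟩ := (hmemB b₀).mp hb₀
  have hdvdT : ∀ t ∈ T, Polynomial.C d ∣ t := by
    intro t ht
    rw [Polynomial.C_dvd_iff_dvd_coeff]
    intro i
    by_cases hi : i ∈ t.support
    · exact hd _ ((hmemB _).mpr ⟨t, ht, i, hi, rfl⟩)
    · rw [Polynomial.notMem_support_iff.mp hi]
      exact dvd_zero d
  obtain ⟨g, hg⟩ := hdvdT t₀ ht₀T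
  have hb₀0 : b₀ ≠ 0 := hB0 b₀ hb₀
  have hd0 : d ≠ 0 := by rintro rfl; rw [zero_mul] at hbc; exact hb₀0 hbc
  have hgj : g.coeff j = c₀ := by
    apply mul_left_cancel₀ hd0
    rw [← Polynomial.coeff_C_mul, ← hg, hcoeff, hbc]
  have hc₀0 : c₀ ≠ 0 := by rintro rfl; rw [mul_zero] at hbc; exact hb₀0 hbc
  have : ACCPat g := accp_poly_of_coeff (j := j) (by rw [hgj]; exact hc₀0)
    (by rw [hgj]; exact hacc)
  exact ⟨d, hdvdT, t₀, ht₀T, g, hg, this⟩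

end PolyHelpers

theorem stmt13 (R : Type*) [CommRing R] [IsDomain R] :
    WeakACCPDom R ↔ WeakACCPDom (Polynomial R) := by
  classical
  constructor
  · rintro ⟨h1, h2⟩
    constructor
    · -- AtomicDom R[X]
      intro f hf0 hfu
      obtain ⟨d, hdvd, t, ht, g, htg, hgacc⟩ :=
        forward_common h2 {f} ⟨f, Finset.mem_singleton_self f⟩
          (by intro t ht; rw [Finset.mem_singleton] at ht; subst ht; exact hf0)
      rw [Finset.mem_singleton] at ht
      subst ht
      have hg0 : g ≠ 0 := by rintro rfl; rw [mul_zero] at htg; exact hf0 htg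
      have hd0 : d ≠ 0 := by
        rintro rfl
        rw [map_zero, zero_mul] at htg
        exact hf0 htg
      by_cases hdu : IsUnit d
      · by_cases hgu : IsUnit g
        · exact absurd (htg ▸ ((Polynomial.isUnit_C.mpr hdu).mul hgu)) hfu
        · obtain ⟨m, hm, hmp⟩ := accp_atomic hgacc hg0 hgu
          have hmne : m ≠ 0 := by
            rintro rfl
            rw [Multiset.prod_zero] at hmp
            exact hgu (hmp ▸ isUnit_one)
          obtain ⟨l', hl', hl'p⟩ :=
            factor_unit_mul (Polynomial.isUnit_C.mpr hdu) hm hmp hmne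
          exact ⟨l', hl', by rw [hl'p, ← htg]⟩
      · obtain ⟨ld, hld, hldp⟩ := h1 d hd0 hdu
        have hldC : ∀ a ∈ ld.map Polynomial.C, Irreducible a := by
          intro a ha
          obtain ⟨b, hb, rfl⟩ := Multiset.mem_map.mp ha
          exact irreducible_C_iff.mpr (hld b hb)
        have hldCp : (ld.map (Polynomial.C : R →+* Polynomial R)).prod
            = Polynomial.C d := by
          rw [← map_multiset_prod, hldp]
        by_cases hgu : IsUnit g
        · have hldne : ld.map (Polynomial.C : R →+* Polynomial R) ≠ 0 := by
            intro hh
            rw [hh, Multiset.prod_zero] at hldCp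
            exact hdu (Polynomial.isUnit_C.mp (hldCp ▸ isUnit_one))
          obtain ⟨l', hl', hl'p⟩ := factor_unit_mul hgu hldC hldCp hldne
          exact ⟨l', hl', by rw [hl'p, ← mul_comm, ← htg]⟩
        · obtain ⟨m, hm, hmp⟩ := accp_atomic hgacc hg0 hgu
          refine ⟨ld.map (Polynomial.C : R →+* Polynomial R) + m, ?_, ?_⟩
          · intro a ha
            rcases Multiset.mem_add.mp ha with h | h
            · exact hldC a h
            · exact hm a h
          · rw [Multiset.prod_add, hldCp, hmp, ← htg]
    · -- finite set property for R[X]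
      intro T hTne hT0
      obtain ⟨d, hdvd, t, ht, g, htg, hgacc⟩ := forward_common h2 T hTne hT0
      exact ⟨Polynomial.C d, hdvd, t, ht, g, htg, hgacc⟩
  · rintro ⟨h1, h2⟩
    constructor
    · -- AtomicDom R
      intro r hr0 hru
      have hC0 : (Polynomial.C r : Polynomial R) ≠ 0 := fun h => hr0 (by simpa using h)
      have hCu : ¬IsUnit (Polynomial.C r : Polynomial R) :=
        fun h => hru (Polynomial.isUnit_C.mp h)
      obtain ⟨l, hl, hlp⟩ := h1 _ hC0 hCu
      have hconst : ∀ p ∈ l, p = Polynomial.C (p.coeff 0) := by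
        intro p hp
        have hdvd : p ∣ Polynomial.C r := hlp ▸ Multiset.dvd_prod hp
        have : p.natDegree = 0 := by
          have := Polynomial.natDegree_le_of_dvd hdvd hC0
          simpa using this
        exact Polynomial.eq_C_of_natDegree_eq_zero this
      refine ⟨l.map (fun p => p.coeff 0), ?_, ?_⟩
      · intro a ha
        obtain ⟨p, hp, rfl⟩ := Multiset.mem_map.mp ha
        exact irreducible_C_iff.mp ((hconst p hp) ▸ hl p hp)
      · apply Polynomial.C_injective
        rw [map_multiset_prod, Multiset.map_map, ← hlp]
        conv_rhs => rw [← Multiset.map_id l]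
        exact congrArg Multiset.prod (Multiset.map_congr rfl (fun p hp => (hconst p hp).symm))
    · -- finite set property for R
      intro S hSne hS0
      set S' : Finset (Polynomial R) := S.image Polynomial.C with hS'
      have hS'ne : S'.Nonempty := hSne.image _
      have hS'0 : ∀ s ∈ S', s ≠ 0 := by
        intro s hs
        obtain ⟨x, hx, rfl⟩ := Finset.mem_image.mp hs
        exact fun h => hS0 x hx (by simpa using h)
      obtain ⟨D, hD, s', hs', c, hsc, hacc⟩ := h2 S' hS'ne hS'0
      obtain ⟨s₀, hs₀, rfl⟩ := Finset.mem_image.mp hs'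
      have hCs₀ : (Polynomial.C s₀ : Polynomial R) ≠ 0 := hS'0 _ hs'
      have hD0 : D ≠ 0 := by rintro rfl; rw [zero_mul] at hsc; exact hCs₀ hsc
      have hc0 : c ≠ 0 := by rintro rfl; rw [mul_zero] at hsc; exact hCs₀ hsc
      have hDdeg : D.natDegree = 0 := by
        have := Polynomial.natDegree_le_of_dvd ⟨c, hsc⟩ hCs₀
        simpa using this
      have hcdeg : c.natDegree = 0 := by
        have h := congrArg Polynomial.natDegree hsc
        rw [Polynomial.natDegree_C, Polynomial.natDegree_mul hD0 hc0] at h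
        omega
      have hDC := Polynomial.eq_C_of_natDegree_eq_zero hDdeg
      have hcC := Polynomial.eq_C_of_natDegree_eq_zero hcdeg
      refine ⟨D.coeff 0, ?_, s₀, hs₀, c.coeff 0, ?_, ?_⟩
      · intro s hs
        have : D ∣ Polynomial.C s := hD _ (Finset.mem_image.mpr ⟨s, hs, rfl⟩)
        rw [hDC] at this
        have := (Polynomial.C_dvd_iff_dvd_coeff _ _).mp this 0
        simpa using this
      · apply Polynomial.C_injective
        rw [map_mul, ← hDC, ← hcC, hsc]
      · rw [hcC] at hacc
        exact accp_of_accp_C hacc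
end

section
/- Let K be an algebraically closed field. Then the group algebra K[ℚ] (with exponents in the additive group of rationals) is antimatter: it contains no irreducible elements. -/
open AddMonoidAlgebra Finsupp Polynomial

section Aux

variable {K : Type*} [Field K]

private lemma mul_apply_maxmax (p q : AddMonoidAlgebra K ℚ)
    (hp : p.coeff.support.Nonempty) (hq : q.coeff.support.Nonempty) :
    (p * q).coeff (p.coeff.support.max' hp + q.coeff.support.max' hq)
      = p.coeff (p.coeff.support.max' hp) * q.coeff (q.coeff.support.max' hq) := by
  classical
  rw [AddMonoidAlgebra.coeff_mul]
  simp only [Finsupp.sum]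
  rw [Finset.sum_eq_single_of_mem _ (p.coeff.support.max'_mem hp)]
  · rw [Finset.sum_eq_single_of_mem _ (q.coeff.support.max'_mem hq)]
    · rw [if_pos rfl]
    · intro b hb hne
      exact if_neg fun hEq => hne (add_left_cancel hEq)
  · intro a ha hne
    refine Finset.sum_eq_zero fun b hb => if_neg fun hEq => ?_
    have h1 : a < p.coeff.support.max' hp := lt_of_le_of_ne (p.coeff.support.le_max' a ha) hne
    have h2 : b ≤ q.coeff.support.max' hq := q.coeff.support.le_max' b hb
    linarith

private lemma mul_apply_minmin (p q : AddMonoidAlgebra K ℚ)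
    (hp : p.coeff.support.Nonempty) (hq : q.coeff.support.Nonempty) :
    (p * q).coeff (p.coeff.support.min' hp + q.coeff.support.min' hq)
      = p.coeff (p.coeff.support.min' hp) * q.coeff (q.coeff.support.min' hq) := by
  classical
  rw [AddMonoidAlgebra.coeff_mul]
  simp only [Finsupp.sum]
  rw [Finset.sum_eq_single_of_mem _ (p.coeff.support.min'_mem hp)]
  · rw [Finset.sum_eq_single_of_mem _ (q.coeff.support.min'_mem hq)]
    · rw [if_pos rfl]
    · intro b hb hne
      exact if_neg fun hEq => hne (add_left_cancel hEq)
  · intro a ha hne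
    refine Finset.sum_eq_zero fun b hb => if_neg fun hEq => ?_
    have h1 : p.coeff.support.min' hp < a := lt_of_le_of_ne (p.coeff.support.min'_le a ha) (Ne.symm hne)
    have h2 : q.coeff.support.min' hq ≤ b := q.coeff.support.min'_le b hb
    linarith

/-- An element of `K[ℚ]` with two distinct elements in its support is not a unit. -/
private lemma not_isUnit_of_two (p : AddMonoidAlgebra K ℚ) {a b : ℚ}
    (ha : a ∈ p.coeff.support) (hb : b ∈ p.coeff.support) (hab : a ≠ b) : ¬ IsUnit p := by
  classical
  rintro ⟨u, rfl⟩
  set v : AddMonoidAlgebra K ℚ := ↑u⁻¹ with hv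
  have hpv : (↑u : AddMonoidAlgebra K ℚ) * v = 1 := u.mul_inv
  have hp : (↑u : AddMonoidAlgebra K ℚ).coeff.support.Nonempty := ⟨a, ha⟩
  have hvne : v ≠ 0 := by
    intro h0
    rw [h0, mul_zero] at hpv
    exact one_ne_zero hpv.symm
  have hq : v.coeff.support.Nonempty := Finsupp.support_nonempty_iff.mpr (mt AddMonoidAlgebra.coeff_eq_zero.mp hvne)
  have hmax := mul_apply_maxmax (↑u : AddMonoidAlgebra K ℚ) v hp hq
  have hmin := mul_apply_minmin (↑u : AddMonoidAlgebra K ℚ) v hp hq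
  rw [hpv] at hmax hmin
  have hA : (↑u : AddMonoidAlgebra K ℚ).coeff ((↑u : AddMonoidAlgebra K ℚ).coeff.support.max' hp) ≠ 0 :=
    Finsupp.mem_support_iff.mp (Finset.max'_mem _ hp)
  have hA' : (↑u : AddMonoidAlgebra K ℚ).coeff ((↑u : AddMonoidAlgebra K ℚ).coeff.support.min' hp) ≠ 0 :=
    Finsupp.mem_support_iff.mp (Finset.min'_mem _ hp)
  have hB : v.coeff (v.coeff.support.max' hq) ≠ 0 := Finsupp.mem_support_iff.mp (Finset.max'_mem _ hq)
  have hB' : v.coeff (v.coeff.support.min' hq) ≠ 0 := Finsupp.mem_support_iff.mp (Finset.min'_mem _ hq)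
  have e1 : (↑u : AddMonoidAlgebra K ℚ).coeff.support.max' hp + v.coeff.support.max' hq = 0 := by
    by_contra hne
    rw [AddMonoidAlgebra.one_def, AddMonoidAlgebra.coeff_single, Finsupp.single_apply, if_neg (fun h => hne h.symm)] at hmax
    exact mul_ne_zero hA hB hmax.symm
  have e2 : (↑u : AddMonoidAlgebra K ℚ).coeff.support.min' hp + v.coeff.support.min' hq = 0 := by
    by_contra hne
    rw [AddMonoidAlgebra.one_def, AddMonoidAlgebra.coeff_single, Finsupp.single_apply, if_neg (fun h => hne h.symm)] at hmin
    exact mul_ne_zero hA' hB' hmin.symm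
  have h1 : (↑u : AddMonoidAlgebra K ℚ).coeff.support.min' hp
      < (↑u : AddMonoidAlgebra K ℚ).coeff.support.max' hp :=
    Finset.min'_lt_max' _ ha hb hab
  have h2 : v.coeff.support.min' hq ≤ v.coeff.support.max' hq :=
    Finset.min'_le _ _ (Finset.max'_mem _ hq)
  linarith

private lemma isUnit_single (a : ℚ) {c : K} (hc : c ≠ 0) :
    IsUnit (AddMonoidAlgebra.single a c) := by
  refine IsUnit.of_mul_eq_one (AddMonoidAlgebra.single (-a) c⁻¹) ?_
  rw [AddMonoidAlgebra.single_mul_single, add_neg_cancel, mul_inv_cancel₀ hc,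
    ← AddMonoidAlgebra.one_def]

/-- The scaling map `ℕ →+ ℚ`, `k ↦ k * c`. -/
private def natScaleHom (c : ℚ) : ℕ →+ ℚ where
  toFun k := (k : ℚ) * c
  map_zero' := by simp
  map_add' x y := by push_cast; ring

private lemma natScaleHom_injective {c : ℚ} (hc : c ≠ 0) :
    Function.Injective (natScaleHom c) := by
  intro x y h
  simp only [natScaleHom, AddMonoidHom.coe_mk, ZeroHom.coe_mk] at h
  exact_mod_cast mul_right_cancel₀ hc h

end Aux

/-- The group algebra `K[ℚ]` over an algebraically closed field is antimatter:
it contains no irreducible elements. -/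
theorem stmt14 (K : Type*) [Field K] [IsAlgClosed K] :
    ∀ f : AddMonoidAlgebra K ℚ, ¬ Irreducible f := by
  classical
  intro f hf
  have hf0 : f ≠ 0 := hf.ne_zero
  have hsupp : f.coeff.support.Nonempty := Finsupp.support_nonempty_iff.mpr (mt AddMonoidAlgebra.coeff_eq_zero.mp hf0)
  -- f has at least two elements in its support
  obtain ⟨a0, ha0⟩ := hsupp
  have htwo : ∃ b ∈ f.coeff.support, b ≠ a0 := by
    by_contra hno
    push_neg at hno
    have hsub : f.coeff.support ⊆ {a0} := fun x hx => Finset.mem_singleton.mpr (hno x hx)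
    have : f = AddMonoidAlgebra.single a0 (f.coeff a0) :=
      AddMonoidAlgebra.coeff_injective ((Finsupp.support_subset_singleton).mp hsub)
    exact hf.not_isUnit (this ▸ isUnit_single a0 (Finsupp.mem_support_iff.mp ha0))
  obtain ⟨b0, hb0, hb0ne⟩ := htwo
  set m := f.coeff.support.min' ⟨a0, ha0⟩ with hm
  set M := f.coeff.support.max' ⟨a0, ha0⟩ with hM
  have hmM : m < M := by
    rcases lt_trichotomy a0 b0 with h | h | h
    · exact lt_of_le_of_lt (Finset.min'_le _ _ ha0) (lt_of_lt_of_le h (Finset.le_max' _ _ hb0))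
    · exact absurd h.symm hb0ne
    · exact lt_of_le_of_lt (Finset.min'_le _ _ hb0) (lt_of_lt_of_le h (Finset.le_max' _ _ ha0))
  have hmmem : m ∈ f.coeff.support := Finset.min'_mem _ _
  have hMmem : M ∈ f.coeff.support := Finset.max'_mem _ _
  -- common denominator
  set N : ℕ := ∏ q ∈ f.coeff.support, q.den with hN
  have hNpos : 0 < N := Finset.prod_pos fun q _ => q.pos
  have hNQ : (0 : ℚ) < (N : ℚ) := by exact_mod_cast hNpos
  have hint : ∀ q ∈ f.coeff.support, ∃ z : ℤ, (q : ℚ) * N = z := by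
    intro q hq
    obtain ⟨t, ht⟩ := Finset.dvd_prod_of_mem (fun q : ℚ => q.den) hq
    refine ⟨q.num * t, ?_⟩
    rw [hN, ht]
    push_cast
    rw [← mul_assoc, Rat.mul_den_eq_num]
  obtain ⟨zm, hzm⟩ := hint m hmmem
  -- the shifted element g, with g y = f (m + y)
  set g : AddMonoidAlgebra K ℚ := AddMonoidAlgebra.single (-m) 1 * f with hg
  have hgapp : ∀ y : ℚ, g.coeff y = f.coeff (m + y) := by
    intro y
    rw [hg, AddMonoidAlgebra.coeff_single_mul_apply, one_mul, neg_neg]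
  -- scaling constant
  set c : ℚ := 1 / (2 * N) with hc
  have hc0 : c ≠ 0 := by positivity
  set h := natScaleHom c with hh
  have hinj : Function.Injective h := natScaleHom_injective hc0
  have happ : ∀ k : ℕ, h k = (k : ℚ) * c := fun k => rfl
  -- every exponent of g is in the range of h
  have hrange : ∀ y ∈ g.coeff.support, ∃ k : ℕ, h k = y := by
    intro y hy
    have hfy : m + y ∈ f.coeff.support := by
      rw [Finsupp.mem_support_iff] at hy ⊢
      rwa [hgapp y] at hy
    obtain ⟨z, hz⟩ := hint (m + y) hfy
    have hy0 : 0 ≤ y := by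
      have := Finset.min'_le _ _ hfy
      rw [← hm] at this
      linarith
    have hzzm : zm ≤ z := by
      have : (zm : ℚ) ≤ (z : ℚ) := by
        rw [← hzm, ← hz]
        nlinarith
      exact_mod_cast this
    refine ⟨(2 * (z - zm)).toNat, ?_⟩
    rw [happ, hc]
    have htn : ((2 * (z - zm)).toNat : ℚ) = 2 * ((z : ℚ) - (zm : ℚ)) := by
      have h1 : (0 : ℤ) ≤ 2 * (z - zm) := by omega
      have h2 := Int.toNat_of_nonneg h1
      have h3 := congrArg (fun t : ℤ => (t : ℚ)) h2
      push_cast at h3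
      linarith
    rw [htn]
    have : (z : ℚ) - zm = y * N := by rw [← hzm, ← hz]; ring
    rw [this]
    field_simp
  -- the preimage polynomial
  have hInjOn : Set.InjOn h (h ⁻¹' ↑g.coeff.support) := fun x _ y _ hxy => hinj hxy
  set P : AddMonoidAlgebra K ℕ := AddMonoidAlgebra.comapDomain h hinj g with hP
  have hPapp : ∀ k : ℕ, P.coeff k = g.coeff (h k) := fun k => rfl
  have hmapP : AddMonoidAlgebra.mapDomain h P = g := by
    refine AddMonoidAlgebra.mapDomain_comapDomain ?_ hinj
    intro y hy
    obtain ⟨k, hk⟩ := hrange y hy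
    exact ⟨k, hk⟩
  -- transfer to Polynomial
  set p : Polynomial K := ⟨P⟩ with hp
  have hptf : p.toFinsupp = P := rfl
  have hcoeff : ∀ k : ℕ, p.coeff k = g.coeff (h k) := fun k => hPapp k
  have hg0 : g.coeff 0 ≠ 0 := by
    rw [hgapp 0, add_zero]
    exact Finsupp.mem_support_iff.mp hmmem
  have hp0 : p.coeff 0 ≠ 0 := by
    rw [hcoeff 0, map_zero]
    exact hg0
  -- the exponent corresponding to M is at least 2
  obtain ⟨zM, hzM⟩ := hint M hMmem
  have hzMzm : zm < zM := by
    have : (zm : ℚ) < (zM : ℚ) := by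
      rw [← hzm, ← hzM]
      nlinarith
    exact_mod_cast this
  set kM : ℕ := (2 * (zM - zm)).toNat with hkM
  have hkM2 : 2 ≤ kM := by omega
  have hhkM : h kM = M - m := by
    rw [happ, hc]
    have htn : ((2 * (zM - zm)).toNat : ℚ) = 2 * ((zM : ℚ) - (zm : ℚ)) := by
      have h1 : (0 : ℤ) ≤ 2 * (zM - zm) := by omega
      have h2 := Int.toNat_of_nonneg h1
      have h3 := congrArg (fun t : ℤ => (t : ℚ)) h2
      push_cast at h3
      linarith
    rw [hkM, htn]
    have : (zM : ℚ) - zm = (M - m) * N := by rw [← hzm, ← hzM]; ring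
    rw [this]
    field_simp
  have hpkM : p.coeff kM ≠ 0 := by
    rw [hcoeff kM, hhkM, hgapp]
    have : m + (M - m) = M := by ring
    rw [this]
    exact Finsupp.mem_support_iff.mp hMmem
  have hdeg2 : 2 ≤ p.natDegree := le_trans hkM2 (Polynomial.le_natDegree_of_ne_zero hpkM)
  -- K is algebraically closed: find a root
  have hdegne : p.degree ≠ 0 := by
    have hpos : 0 < p.natDegree := lt_of_lt_of_le (by norm_num) hdeg2
    have := Polynomial.natDegree_pos_iff_degree_pos.mp hpos
    exact this.ne'
  obtain ⟨a, hroot⟩ := IsAlgClosed.exists_root p hdegne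
  have ha0 : a ≠ 0 := by
    intro h0
    rw [h0] at hroot
    rw [Polynomial.IsRoot, ← Polynomial.coeff_zero_eq_eval_zero] at hroot
    exact hp0 hroot
  obtain ⟨q, hq⟩ := (Polynomial.dvd_iff_isRoot.mpr hroot)
  have hq0 : q.coeff 0 ≠ 0 := by
    intro h0
    have := Polynomial.mul_coeff_zero (Polynomial.X - Polynomial.C a) q
    rw [← hq, h0, mul_zero] at this
    exact hp0 this
  have hqne : q ≠ 0 := fun h0 => hq0 (by rw [h0]; simp)
  have hdq : 1 ≤ q.natDegree := by
    have := Polynomial.natDegree_mul (Polynomial.X_sub_C_ne_zero a) hqne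
    rw [← hq, Polynomial.natDegree_X_sub_C] at this
    omega
  -- map back to K[ℚ]
  set E : AddMonoidAlgebra K ℕ →+* AddMonoidAlgebra K ℚ :=
    AddMonoidAlgebra.mapDomainRingHom K h with hE
  have hEapp : ∀ (r : AddMonoidAlgebra K ℕ), E r = AddMonoidAlgebra.mapDomain h r := fun r => rfl
  have hPfact : P = (Polynomial.X - Polynomial.C a).toFinsupp * q.toFinsupp := by
    rw [← Polynomial.toFinsupp_mul, ← hq]
  have hgfact : g = E ((Polynomial.X - Polynomial.C a).toFinsupp) * E (q.toFinsupp) := by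
    rw [← map_mul, ← hPfact, hEapp, hmapP]
  -- f = (single m 1 * E A) * E B
  have hffact : f = (AddMonoidAlgebra.single m (1 : K) * E ((Polynomial.X - Polynomial.C a).toFinsupp))
      * E (q.toFinsupp) := by
    rw [mul_assoc, ← hgfact, hg, ← mul_assoc, AddMonoidAlgebra.single_mul_single,
      add_neg_cancel, mul_one, ← AddMonoidAlgebra.one_def, one_mul]
  -- coefficients of the two factors
  have hEA : ∀ k : ℕ, (E ((Polynomial.X - Polynomial.C a).toFinsupp)).coeff (h k)
      = (Polynomial.X - Polynomial.C a).coeff k := by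
    intro k
    rw [hEapp, AddMonoidAlgebra.mapDomain, AddMonoidAlgebra.coeff_ofCoeff, Finsupp.mapDomain_apply hinj]
    rfl
  have hEB : ∀ k : ℕ, (E (q.toFinsupp)).coeff (h k) = q.coeff k := by
    intro k
    rw [hEapp, AddMonoidAlgebra.mapDomain, AddMonoidAlgebra.coeff_ofCoeff, Finsupp.mapDomain_apply hinj]
    rfl
  rcases hf.isUnit_or_isUnit hffact with hcase | hcase
  · -- then E A is a unit
    have hEAunit : IsUnit (E ((Polynomial.X - Polynomial.C a).toFinsupp)) := by
      have := (isUnit_single (-m) (one_ne_zero : (1 : K) ≠ 0)).mul hcase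
      rwa [← mul_assoc, AddMonoidAlgebra.single_mul_single, neg_add_cancel, one_mul,
        ← AddMonoidAlgebra.one_def, one_mul] at this
    refine not_isUnit_of_two _ (a := h 0) (b := h 1) ?_ ?_ ?_ hEAunit
    · rw [Finsupp.mem_support_iff, hEA 0]
      simpa using ha0
    · rw [Finsupp.mem_support_iff, hEA 1]
      simp
    · exact fun hEq => (by norm_num : (0 : ℕ) ≠ 1) (hinj hEq)
  · refine not_isUnit_of_two _ (a := h 0) (b := h q.natDegree) ?_ ?_ ?_ hcase
    · rw [Finsupp.mem_support_iff, hEB 0]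
      exact hq0
    · rw [Finsupp.mem_support_iff, hEB q.natDegree]
      exact Polynomial.leadingCoeff_ne_zero.mpr hqne
    · intro hEq
      have := hinj hEq
      omega
end

section
/- Let F be a field of characteristic p > 0 where F is perfect (e.g., F = 𝔽_p). Then every nonunit of the group algebra F[ℚ] is the p-th power of a nonunit; hence F[ℚ] is an antimatter domain. -/
/-- Over a perfect field of characteristic `p > 0`, every nonunit of the group algebra
`F[ℚ]` is a `p`-th power of a nonunit; hence `F[ℚ]` is antimatter. -/
theorem stmt15 (F : Type*) [Field F] (p : ℕ) [Fact p.Prime] [CharP F p]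
    [PerfectRing F p] :
    (∀ f : AddMonoidAlgebra F ℚ, ¬ IsUnit f → ∃ g : AddMonoidAlgebra F ℚ,
      ¬ IsUnit g ∧ f = g ^ p) ∧
    (∀ f : AddMonoidAlgebra F ℚ, ¬ Irreducible f) := by
  have hp : p.Prime := Fact.out
  have hp0 : (p : ℚ) ≠ 0 := by exact_mod_cast hp.ne_zero
  haveI : CharP (AddMonoidAlgebra F ℚ) p :=
    charP_of_injective_ringHom
      (f := AddMonoidAlgebra.singleZeroRingHom (R := F) (M := ℚ))
      (fun a b h => by simpa using AddMonoidAlgebra.single_right_inj.mp h) p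
  have hpow : ∀ f : AddMonoidAlgebra F ℚ, ∃ g : AddMonoidAlgebra F ℚ, g ^ p = f := by
    intro f
    refine ⟨f.coeff.sum fun a c =>
      AddMonoidAlgebra.single (a / p) ((frobeniusEquiv F p).symm c), ?_⟩
    rw [← frobenius_def, map_finsuppSum]
    conv_rhs => rw [← f.sum_coeff_single]
    refine Finsupp.sum_congr fun a _ => ?_
    rw [frobenius_def, AddMonoidAlgebra.single_pow]
    congr 1
    · rw [nsmul_eq_mul]
      field_simp
    · exact (frobeniusEquiv F p).apply_symm_apply _
  have main : ∀ f : AddMonoidAlgebra F ℚ, ¬ IsUnit f →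
      ∃ g : AddMonoidAlgebra F ℚ, ¬ IsUnit g ∧ f = g ^ p := by
    intro f hf
    obtain ⟨g, hg⟩ := hpow f
    exact ⟨g, fun hu => hf (hg ▸ hu.pow p), hg.symm⟩
  refine ⟨main, fun f hirr => ?_⟩
  obtain ⟨g, hgu, hfp⟩ := main f hirr.not_isUnit
  have hfac : f = g * g ^ (p - 1) := by
    rw [hfp, ← pow_succ', Nat.sub_add_cancel hp.one_lt.le]
  rcases hirr.isUnit_or_isUnit hfac with h | h
  · exact hgu h
  · exact hgu ((isUnit_pow_iff (Nat.sub_ne_zero_of_lt hp.one_lt)).mp h)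
end

section
/- Let (pₙ) be a strictly increasing sequence of odd primes with Σ 1/pₙ < 1/3, let P = ⟨1/pₙ : n⟩ ⊆ ℚ≥0, let β > 1 be irrational, and let M be the additive submonoid of ℝ≥0 generated by A ∪ B, where A = { 1/p_{j_k} + Σ_{i=1}^{ℓ} 1/p_{j_i} : ℓ ∈ ℕ, 1 ≤ k ≤ ℓ, j₁ < ... < j_ℓ } and B = {β} ∪ { β − Σ_{i=1}^{ℓ} 1/p_i : ℓ ∈ ℕ }. Then M is atomic with set of atoms exactly A ∪ B. -/
/-- The set `A`: sums of distinct generators `1/p_{j₁}, ..., 1/p_{j_ℓ}` with exactly one of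
them counted twice. -/
def Aset (p : ℕ → ℕ) : Set ℝ :=
  {x | ∃ (s : Finset ℕ) (k : ℕ), k ∈ s ∧
    x = 1 / (p k : ℝ) + ∑ i ∈ s, 1 / (p i : ℝ)}

/-- The set `B = {β} ∪ {β − Σ_{i=1}^ℓ 1/pᵢ : ℓ ∈ ℕ}`. -/
def Bset (p : ℕ → ℕ) (β : ℝ) : Set ℝ :=
  {x | ∃ n : ℕ, x = β - ∑ i ∈ Finset.range n, 1 / (p i : ℝ)}

/-- An atom of a positive monoid: a nonzero element that is not a sum of two nonzero
elements of the monoid. -/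
def AtomOfR (M : AddSubmonoid ℝ) (a : ℝ) : Prop :=
  a ∈ M ∧ a ≠ 0 ∧ ¬ ∃ u ∈ M, ∃ v ∈ M, u ≠ 0 ∧ v ≠ 0 ∧ a = u + v

/-- A positive monoid is atomic if every nonzero element is a sum of atoms. -/
def AtomicR (M : AddSubmonoid ℝ) : Prop :=
  ∀ x ∈ M, x ≠ 0 → ∃ l : Multiset ℝ, (∀ a ∈ l, AtomOfR M a) ∧ l.sum = x



noncomputable def valF (p : ℕ → ℕ) : (ℕ →₀ ℕ) →+ ℝ :=
  Finsupp.liftAddHom fun k => (AddMonoidHom.mulRight (1 / (p k : ℝ))).comp (Nat.castAddMonoidHom ℝ)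

lemma valF_single (p : ℕ → ℕ) (k c) : valF p (Finsupp.single k c) = c / (p k : ℝ) := by
  simp [valF, div_eq_mul_inv]

lemma valF_eq_sum (p : ℕ → ℕ) (m : ℕ →₀ ℕ) (F : Finset ℕ) (hF : m.support ⊆ F) :
    valF p m = ∑ j ∈ F, (m j : ℝ) / p j := by
  rw [valF, Finsupp.liftAddHom_apply, Finsupp.sum]
  rw [Finset.sum_subset hF]
  · exact Finset.sum_congr rfl fun j _ => by simp [div_eq_mul_inv]
  · intro x _ hx
    simp [Finsupp.notMem_support_iff.mp hx]

lemma le_valF (p : ℕ → ℕ) (hp : ∀ n, 0 < (p n : ℝ)) (m : ℕ →₀ ℕ) (k : ℕ) :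
    (m k : ℝ) / p k ≤ valF p m := by
  rw [valF_eq_sum p m (m.support ∪ {k}) Finset.subset_union_left]
  refine Finset.single_le_sum (f := fun j => (m j : ℝ) / p j) ?_ ?_
  · intro i _; positivity
  · exact Finset.mem_union_right _ (Finset.mem_singleton_self k)

lemma valF_nonneg (p : ℕ → ℕ) (hp : ∀ n, 0 < (p n : ℝ)) (m : ℕ →₀ ℕ) : 0 ≤ valF p m := by
  rw [valF_eq_sum p m m.support subset_rfl]
  exact Finset.sum_nonneg fun i _ => by positivity

lemma valF_inj (p : ℕ → ℕ) (hprime : ∀ n, (p n).Prime) (hinj : Function.Injective p)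
    (m m' : ℕ →₀ ℕ) (h : valF p m = valF p m') (h1 : valF p m < 1) : m = m' := by
  have hp : ∀ n, 0 < (p n : ℝ) := fun n => by
    exact_mod_cast (hprime n).pos
  have hml : ∀ k, m k < p k := by
    intro k
    have := (le_valF p hp m k).trans_lt h1
    rw [div_lt_one (hp k)] at this
    exact_mod_cast this
  have hml' : ∀ k, m' k < p k := by
    intro k
    have := (le_valF p hp m' k).trans_lt (h ▸ h1)
    rw [div_lt_one (hp k)] at this
    exact_mod_cast this
  set F := m.support ∪ m'.support with hFdef
  have key : ∑ k ∈ F, (m k : ℝ) / p k = ∑ k ∈ F, (m' k : ℝ) / p k := by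
    rw [← valF_eq_sum p m F Finset.subset_union_left,
      ← valF_eq_sum p m' F Finset.subset_union_right, h]
  have hnat : ∑ k ∈ F, m k * ∏ j ∈ F.erase k, p j
      = ∑ k ∈ F, m' k * ∏ j ∈ F.erase k, p j := by
    have hcast : ∀ (f : ℕ →₀ ℕ), ((∑ k ∈ F, f k * ∏ j ∈ F.erase k, p j : ℕ) : ℝ)
        = (∑ k ∈ F, (f k : ℝ) / p k) * ∏ j ∈ F, (p j : ℝ) := by
      intro f
      push_cast
      rw [Finset.sum_mul]
      refine Finset.sum_congr rfl fun k hk => ?_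
      rw [← Finset.mul_prod_erase F (fun j => (p j : ℝ)) hk]
      rw [div_mul_eq_mul_div, mul_comm ((p k:ℝ)) _, ← mul_assoc, mul_div_assoc,
        div_self (ne_of_gt (hp k)), mul_one]
    have := (hcast m).trans (by rw [key, ← hcast m'])
    exact_mod_cast this
  ext i
  by_cases hi : i ∈ F
  · haveI : Fact (p i).Prime := ⟨hprime i⟩
    have hz : ∀ k ∈ F, k ≠ i → ((∏ j ∈ F.erase k, p j : ℕ) : ZMod (p i)) = 0 := by
      intro k _ hk
      push_cast
      refine Finset.prod_eq_zero (Finset.mem_erase.mpr ⟨fun he => hk he.symm, hi⟩) ?_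
      exact_mod_cast (ZMod.natCast_self (p i))
    have hcongr := congrArg (fun n : ℕ => (n : ZMod (p i))) hnat
    simp only [Nat.cast_sum, Nat.cast_mul] at hcongr
    have hred : ∀ (f : ℕ →₀ ℕ), ∑ k ∈ F, ((f k : ZMod (p i)) * ((∏ j ∈ F.erase k, p j : ℕ) : ZMod (p i)))
        = (f i : ZMod (p i)) * ((∏ j ∈ F.erase i, p j : ℕ) : ZMod (p i)) := by
      intro f
      refine Finset.sum_eq_single i (fun k hk hki => ?_) (fun h => absurd hi h)
      rw [hz k hk hki, mul_zero]
    rw [hred m, hred m'] at hcongr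
    have hu : ((∏ j ∈ F.erase i, p j : ℕ) : ZMod (p i)) ≠ 0 := by
      push_cast
      refine Finset.prod_ne_zero_iff.mpr fun j hj => ?_
      intro h0
      have hdvd : p i ∣ p j := (ZMod.natCast_eq_zero_iff _ _).mp h0
      have := ((Nat.prime_dvd_prime_iff_eq (hprime i) (hprime j)).mp hdvd)
      exact (Finset.mem_erase.mp hj).1 (hinj this.symm)
    have : (m i : ZMod (p i)) = (m' i : ZMod (p i)) := mul_right_cancel₀ hu hcongr
    have := congrArg ZMod.val this
    rwa [ZMod.val_cast_of_lt (hml i), ZMod.val_cast_of_lt (hml' i)] at this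
  · rw [hFdef, Finset.mem_union, not_or] at hi
    rw [Finsupp.notMem_support_iff.mp hi.1, Finsupp.notMem_support_iff.mp hi.2]

def RatR (x : ℝ) : Prop := ∃ q : ℚ, (q : ℝ) = x

lemma ratR_partial (p : ℕ → ℕ) (s : Finset ℕ) : RatR (∑ i ∈ s, 1 / (p i : ℝ)) :=
  ⟨∑ i ∈ s, 1 / (p i : ℚ), by push_cast; rfl⟩

lemma ratR_A {p : ℕ → ℕ} {x : ℝ} (hx : x ∈ Aset p) : RatR x := by
  obtain ⟨s, k, hk, rfl⟩ := hx
  obtain ⟨q, hq⟩ := ratR_partial p s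
  exact ⟨1 / (p k : ℚ) + q, by push_cast [hq]; ring⟩

lemma ratR_add {x y : ℝ} (hx : RatR x) (hy : RatR y) : RatR (x + y) := by
  obtain ⟨q, rfl⟩ := hx; obtain ⟨r, rfl⟩ := hy; exact ⟨q + r, by push_cast; ring⟩

lemma ratR_sum (l : Multiset ℝ) (h : ∀ x ∈ l, RatR x) : RatR l.sum := by
  induction l using Multiset.induction_on with
  | empty => exact ⟨0, by simp⟩
  | cons a t ih =>
    rw [Multiset.sum_cons]
    exact ratR_add (h a (Multiset.mem_cons_self a t))
      (ih fun x hx => h x (Multiset.mem_cons_of_mem hx))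

lemma notRat_B {p : ℕ → ℕ} {β x : ℝ} (hβirr : Irrational β) (hx : x ∈ Bset p β) : ¬ RatR x := by
  obtain ⟨n, rfl⟩ := hx
  rintro ⟨q, hq⟩
  obtain ⟨r, hr⟩ := ratR_partial p (Finset.range n)
  exact hβirr ⟨q + r, by push_cast [hq, hr]; ring⟩

lemma int_mul_irr {β : ℝ} (hβirr : Irrational β) {z : ℤ} (hz : z ≠ 0) : ¬ RatR ((z : ℝ) * β) := by
  rintro ⟨q, hq⟩
  refine hβirr ⟨q / z, ?_⟩
  have hz' : (z : ℝ) ≠ 0 := Int.cast_ne_zero.mpr hz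
  push_cast
  field_simp
  linarith [hq]

lemma repA (p : ℕ → ℕ) {x : ℝ} (hx : x ∈ Aset p) :
    ∃ (m : ℕ →₀ ℕ) (k₀ : ℕ), x = valF p m ∧ m k₀ = 2 ∧
      ∀ j, m j ≤ 2 ∧ (2 ≤ m j → j = k₀) := by
  obtain ⟨s, k, hk, rfl⟩ := hx
  classical
  refine ⟨Finsupp.single k 1 + ∑ i ∈ s, Finsupp.single i 1, k, ?_, ?_, ?_⟩
  · rw [map_add, map_sum, valF_single]
    push_cast
    congr 1
    exact Finset.sum_congr rfl fun i _ => by rw [valF_single]; push_cast; rfl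
  · simp [Finsupp.add_apply, Finsupp.finset_sum_apply, Finsupp.single_apply,
      Finset.sum_ite_eq', hk]
  · intro j
    have : (∑ i ∈ s, Finsupp.single i (1:ℕ)) j = if j ∈ s then 1 else 0 := by
      simp [Finsupp.finset_sum_apply, Finsupp.single_apply, Finset.sum_ite_eq']
    rw [Finsupp.add_apply, this, Finsupp.single_apply]
    constructor
    · split_ifs <;> omega
    · split_ifs with h1 h2 h2 <;> omega

lemma multiA (p : ℕ → ℕ) (l : Multiset ℝ) (hl : ∀ x ∈ l, x ∈ Aset p) :
    ∃ (m : ℕ →₀ ℕ) (ks : Multiset ℕ), l.sum = valF p m ∧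
      ks.card = l.card ∧ ∀ k, 2 * ks.count k ≤ m k := by
  classical
  induction l using Multiset.induction_on with
  | empty => exact ⟨0, 0, by simp, by simp, fun k => by simp⟩
  | cons a t ih =>
    obtain ⟨m, ks, hsum, hcard, hcnt⟩ := ih fun x hx => hl x (Multiset.mem_cons_of_mem hx)
    obtain ⟨m₀, k₀, hae, hk₀, hprop⟩ := repA p (hl a (Multiset.mem_cons_self a t))
    refine ⟨m₀ + m, k₀ ::ₘ ks, ?_, ?_, ?_⟩
    · rw [Multiset.sum_cons, map_add, hsum, hae]
    · simp [hcard]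
    · intro k
      rw [Finsupp.add_apply]
      have h1 := hcnt k
      have h2 := hk₀
      by_cases hk : k = k₀
      · subst hk
        rw [Multiset.count_cons_self]
        omega
      · rw [Multiset.count_cons_of_ne hk]
        omega

lemma multiB (p : ℕ → ℕ) (β : ℝ) (l : Multiset ℝ) (hl : ∀ x ∈ l, x ∈ Bset p β) :
    ∃ q : ℚ, l.sum = (l.card : ℝ) * β - q := by
  induction l using Multiset.induction_on with
  | empty => exact ⟨0, by simp⟩
  | cons a t ih =>
    obtain ⟨q, hq⟩ := ih fun x hx => hl x (Multiset.mem_cons_of_mem hx)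
    obtain ⟨n, hn⟩ := hl a (Multiset.mem_cons_self a t)
    obtain ⟨r, hr⟩ : ∃ r : ℚ, (r:ℝ) = ∑ i ∈ Finset.range n, 1 / (p i : ℝ) :=
      ⟨∑ i ∈ Finset.range n, 1 / (p i : ℚ), by push_cast; ring⟩
    refine ⟨q + r, ?_⟩
    rw [Multiset.sum_cons, hq, hn, ← hr, Multiset.card_cons]
    push_cast
    ring

lemma sum_lt_third (p : ℕ → ℕ) (hprime : ∀ n, (p n).Prime)
    (hsum : Summable (fun n => 1 / (p n : ℝ)))
    (hlt : (∑' n : ℕ, 1 / (p n : ℝ)) < 1 / 3) (s : Finset ℕ) :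
    ∑ i ∈ s, 1 / (p i : ℝ) < 1 / 3 := by
  refine lt_of_le_of_lt ?_ hlt
  refine Summable.sum_le_tsum s (fun i _ => ?_) hsum
  positivity

lemma Abound (p : ℕ → ℕ) (hprime : ∀ n, (p n).Prime)
    (hsum : Summable (fun n => 1 / (p n : ℝ)))
    (hlt : (∑' n : ℕ, 1 / (p n : ℝ)) < 1 / 3) {x : ℝ} (hx : x ∈ Aset p) :
    0 < x ∧ x < 2 / 3 := by
  obtain ⟨s, k, hk, rfl⟩ := hx
  have hp : (0:ℝ) < p k := by exact_mod_cast (hprime k).pos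
  have h1 : (0:ℝ) < 1 / p k := by positivity
  have h2 : 1 / (p k : ℝ) ≤ ∑ i ∈ s, 1 / (p i : ℝ) := by
    refine Finset.single_le_sum (f := fun i => 1 / (p i : ℝ)) (fun i _ => ?_) hk
    positivity
  have h3 := sum_lt_third p hprime hsum hlt s
  constructor <;> linarith

lemma Bbound (p : ℕ → ℕ) (hprime : ∀ n, (p n).Prime)
    (hsum : Summable (fun n => 1 / (p n : ℝ)))
    (hlt : (∑' n : ℕ, 1 / (p n : ℝ)) < 1 / 3) {β x : ℝ} (hβ1 : 1 < β)
    (hx : x ∈ Bset p β) : 2 / 3 < x := by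
  obtain ⟨n, rfl⟩ := hx
  have h3 := sum_lt_third p hprime hsum hlt (Finset.range n)
  linarith

lemma msum_pos (l : Multiset ℝ) (h : ∀ x ∈ l, 0 < x) (hne : l ≠ 0) : 0 < l.sum := by
  obtain ⟨a, ha⟩ := Multiset.exists_mem_of_ne_zero hne
  obtain ⟨t, rfl⟩ := Multiset.exists_cons_of_mem ha
  rw [Multiset.sum_cons]
  have h1 : 0 ≤ t.sum :=
    Multiset.sum_nonneg fun x hx => (h x (Multiset.mem_cons_of_mem hx)).le
  have h2 := h a (Multiset.mem_cons_self a t)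
  linarith

lemma core (p : ℕ → ℕ) (hmono : StrictMono p) (hprime : ∀ n, (p n).Prime)
    (hsum : Summable (fun n => 1 / (p n : ℝ)))
    (hlt : (∑' n : ℕ, 1 / (p n : ℝ)) < 1 / 3)
    (β : ℝ) (hβ1 : 1 < β) (hβirr : Irrational β)
    (g : ℝ) (hg : g ∈ Aset p ∪ Bset p β)
    (l : Multiset ℝ) (hl : ∀ x ∈ l, x ∈ Aset p ∪ Bset p β)
    (hcard : 2 ≤ Multiset.card l) : l.sum ≠ g := by
  classical
  intro heq
  set lA := l.filter RatR with hlAdef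
  set lB := l.filter (fun x => ¬ RatR x) with hlBdef
  have hsplit : lA + lB = l := Multiset.filter_add_not _ l
  have hlA : ∀ x ∈ lA, x ∈ Aset p := by
    intro x hx
    have hxl := Multiset.mem_of_mem_filter hx
    have hr := Multiset.of_mem_filter hx
    rcases hl x hxl with h | h
    · exact h
    · exact absurd hr (notRat_B hβirr h)
  have hlB : ∀ x ∈ lB, x ∈ Bset p β := by
    intro x hx
    have hxl := Multiset.mem_of_mem_filter hx
    have hr := Multiset.of_mem_filter hx
    rcases hl x hxl with h | h
    · exact absurd (ratR_A h) hr
    · exact h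
  obtain ⟨qB, hqB⟩ := multiB p β lB hlB
  obtain ⟨qA, hqA⟩ := ratR_sum lA fun x hx => ratR_A (hlA x hx)
  have hls : l.sum = lA.sum + lB.sum := by rw [← hsplit, Multiset.sum_add]
  have hcards : Multiset.card lA + Multiset.card lB = Multiset.card l := by
    rw [← Multiset.card_add, hsplit]
  rcases hg with hgA | hgB
  · -- g ∈ Aset
    obtain ⟨qg, hqg⟩ := ratR_A hgA
    have hn0 : Multiset.card lB = 0 := by
      by_contra hn
      refine int_mul_irr hβirr (z := (Multiset.card lB : ℤ))
        (by exact_mod_cast hn) ⟨qg - qA + qB, ?_⟩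
      rw [hls, hqB] at heq
      push_cast
      linarith [hqg.symm ▸ heq]
    have hlB0 : lB = 0 := Multiset.card_eq_zero.mp hn0
    have hlAll : ∀ x ∈ l, x ∈ Aset p := by
      intro x hx
      rw [← hsplit, hlB0, add_zero] at hx
      exact hlA x hx
    obtain ⟨m, ks, hm, hkscard, hcnt⟩ := multiA p l hlAll
    obtain ⟨m₀, k₀, hgm, hk₀, hprop⟩ := repA p hgA
    have hglt : g < 2 / 3 := (Abound p hprime hsum hlt hgA).2
    have hmlt : valF p m < 1 := by rw [← hm, heq]; linarith
    have hmeq : m = m₀ := valF_inj p hprime hmono.injective m m₀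
      (by rw [← hm, heq, hgm]) hmlt
    have hksne : ks ≠ 0 := by
      intro h
      rw [h] at hkscard
      simp at hkscard
      omega
    obtain ⟨a, ha⟩ := Multiset.exists_mem_of_ne_zero hksne
    obtain ⟨t, rfl⟩ := Multiset.exists_cons_of_mem ha
    have htne : t ≠ 0 := by
      intro h
      rw [h] at hkscard
      simp at hkscard
      omega
    obtain ⟨b, hb⟩ := Multiset.exists_mem_of_ne_zero htne
    by_cases hab : a = b
    · subst hab
      have h1 : 2 ≤ Multiset.count a (a ::ₘ t) := by
        rw [Multiset.count_cons_self]
        have := Multiset.count_pos.mpr hb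
        omega
      have h2 := hcnt a
      have h3 := (hprop a).1
      rw [hmeq] at h2
      omega
    · have h1 : 1 ≤ Multiset.count a (a ::ₘ t) := Multiset.count_pos.mpr (Multiset.mem_cons_self a t)
      have h2 : 1 ≤ Multiset.count b (a ::ₘ t) := Multiset.count_pos.mpr (Multiset.mem_cons_of_mem hb)
      have h3 := hcnt a
      have h4 := hcnt b
      rw [hmeq] at h3 h4
      have h5 := (hprop a).2 (by omega)
      have h6 := (hprop b).2 (by omega)
      exact hab (h5.trans h6.symm)
  · -- g ∈ Bset
    obtain ⟨n₀, hg0⟩ := hgB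
    obtain ⟨q₀, hq₀⟩ := ratR_partial p (Finset.range n₀)
    have hn1 : Multiset.card lB = 1 := by
      by_contra hn
      refine int_mul_irr hβirr (z := (Multiset.card lB : ℤ) - 1)
        (by omega) ⟨-q₀ - qA + qB, ?_⟩
      rw [hls, hqB, hg0] at heq
      push_cast
      nlinarith [hq₀, heq, hqA]
    obtain ⟨b, hbeq⟩ := Multiset.card_eq_one.mp hn1
    have hbB : b ∈ Bset p β := hlB b (by rw [hbeq]; exact Multiset.mem_singleton_self b)
    obtain ⟨n₁, hb1⟩ := hbB
    have hlBsum : lB.sum = b := by rw [hbeq, Multiset.sum_singleton]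
    have hlAne : lA ≠ 0 := by
      intro h
      rw [h] at hcards
      simp [hn1] at hcards
      omega
    have hlApos : 0 < lA.sum :=
      msum_pos _ (fun x hx => (Abound p hprime hsum hlt (hlA x hx)).1) hlAne
    have hsum_eq : lA.sum = (∑ i ∈ Finset.range n₁, 1 / (p i : ℝ))
        - ∑ i ∈ Finset.range n₀, 1 / (p i : ℝ) := by
      rw [hls, hlBsum, hb1, hg0] at heq
      linarith
    have hn01 : n₀ < n₁ := by
      by_contra h
      push_neg at h
      have hsub : (∑ i ∈ Finset.range n₁, 1 / (p i : ℝ)) ≤ ∑ i ∈ Finset.range n₀, 1 / (p i : ℝ) := by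
        refine Finset.sum_le_sum_of_subset_of_nonneg (Finset.range_subset_range.mpr h) ?_
        intro i _ _
        positivity
      linarith
    have hIco : lA.sum = ∑ i ∈ Finset.Ico n₀ n₁, 1 / (p i : ℝ) := by
      rw [Finset.sum_Ico_eq_sub _ hn01.le]
      exact hsum_eq
    set m' : ℕ →₀ ℕ := ∑ i ∈ Finset.Ico n₀ n₁, Finsupp.single i 1 with hm'def
    have hvm' : valF p m' = ∑ i ∈ Finset.Ico n₀ n₁, 1 / (p i : ℝ) := by
      rw [hm'def, map_sum]
      exact Finset.sum_congr rfl fun i _ => by rw [valF_single]; norm_num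
    have hm'le : ∀ j, m' j ≤ 1 := by
      intro j
      rw [hm'def]
      classical
      rw [Finsupp.finset_sum_apply]
      simp only [Finsupp.single_apply]
      rw [Finset.sum_ite_eq' (Finset.Ico n₀ n₁) j fun _ => 1]
      split_ifs <;> omega
    obtain ⟨m, ks, hm, hkscard, hcnt⟩ := multiA p lA hlA
    have hlt1 : valF p m < 1 := by
      have := sum_lt_third p hprime hsum hlt (Finset.Ico n₀ n₁)
      rw [← hm, hIco]
      linarith
    have hmeq : m = m' := valF_inj p hprime hmono.injective m m'
      (by rw [← hm, hIco, hvm']) hlt1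
    have hksne : ks ≠ 0 := by
      intro h
      rw [h] at hkscard
      simp at hkscard
      exact hlAne (Multiset.card_eq_zero.mp hkscard.symm)
    obtain ⟨a, ha⟩ := Multiset.exists_mem_of_ne_zero hksne
    have h1 := hcnt a
    have h2 := Multiset.count_pos.mpr ha
    have h3 := hm'le a
    rw [hmeq] at h1
    omega

theorem stmt16 (p : ℕ → ℕ) (hmono : StrictMono p) (hprime : ∀ n, (p n).Prime)
    (hodd : ∀ n, Odd (p n))
    (hsum : Summable (fun n => 1 / (p n : ℝ)))
    (hlt : (∑' n : ℕ, 1 / (p n : ℝ)) < 1 / 3)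
    (β : ℝ) (hβ1 : 1 < β) (hβirr : Irrational β)
    (M : AddSubmonoid ℝ) (hM : M = AddSubmonoid.closure (Aset p ∪ Bset p β)) :
    AtomicR M ∧ {a : ℝ | AtomOfR M a} = Aset p ∪ Bset p β := by
  subst hM
  set G := Aset p ∪ Bset p β with hGdef
  have hpos : ∀ x ∈ G, (0:ℝ) < x := by
    rintro x (hx | hx)
    · exact (Abound p hprime hsum hlt hx).1
    · have := Bbound p hprime hsum hlt hβ1 hx
      linarith
  have hatom : ∀ g ∈ G, AtomOfR (AddSubmonoid.closure G) g := by
    intro g hg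
    refine ⟨AddSubmonoid.subset_closure hg, (hpos g hg).ne', ?_⟩
    rintro ⟨u, hu, v, hv, hu0, hv0, heq⟩
    obtain ⟨l₁, hl₁, hs₁⟩ := AddSubmonoid.exists_multiset_of_mem_closure hu
    obtain ⟨l₂, hl₂, hs₂⟩ := AddSubmonoid.exists_multiset_of_mem_closure hv
    have hl₁ne : l₁ ≠ 0 := by rintro rfl; exact hu0 (by simp [← hs₁])
    have hl₂ne : l₂ ≠ 0 := by rintro rfl; exact hv0 (by simp [← hs₂])
    have hcard : 2 ≤ Multiset.card (l₁ + l₂) := by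
      rw [Multiset.card_add]
      have h1 := Multiset.card_pos.mpr hl₁ne
      have h2 := Multiset.card_pos.mpr hl₂ne
      omega
    refine core p hmono hprime hsum hlt β hβ1 hβirr g hg (l₁ + l₂) ?_ hcard ?_
    · intro x hx
      rcases Multiset.mem_add.mp hx with h | h
      · exact hl₁ x h
      · exact hl₂ x h
    · rw [Multiset.sum_add, hs₁, hs₂, ← heq]
  have hatom' : ∀ a : ℝ, AtomOfR (AddSubmonoid.closure G) a → a ∈ G := by
    rintro a ⟨haM, ha0, hnot⟩
    obtain ⟨l, hlg, hls⟩ := AddSubmonoid.exists_multiset_of_mem_closure haM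
    have hlne : l ≠ 0 := by rintro rfl; exact ha0 (by simp [← hls])
    obtain ⟨x, hx⟩ := Multiset.exists_mem_of_ne_zero hlne
    obtain ⟨t, rfl⟩ := Multiset.exists_cons_of_mem hx
    by_cases ht : t = 0
    · subst ht
      rw [← hls, Multiset.sum_cons, Multiset.sum_zero, add_zero]
      exact hlg x (Multiset.mem_cons_self x 0)
    · exfalso
      apply hnot
      refine ⟨x, AddSubmonoid.subset_closure (hlg x (Multiset.mem_cons_self x t)),
        t.sum, AddSubmonoid.multiset_sum_mem _ t
          (fun y hy => AddSubmonoid.subset_closure (hlg y (Multiset.mem_cons_of_mem hy))),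
        (hpos x (hlg x (Multiset.mem_cons_self x t))).ne', ?_, ?_⟩
      · exact (msum_pos t (fun y hy => hpos y (hlg y (Multiset.mem_cons_of_mem hy))) ht).ne'
      · rw [← hls, Multiset.sum_cons]
  constructor
  · intro x hx hx0
    obtain ⟨l, hlg, hls⟩ := AddSubmonoid.exists_multiset_of_mem_closure hx
    exact ⟨l, fun a ha => hatom a (hlg a ha), hls⟩
  · ext a
    exact ⟨fun h => hatom' a h, fun h => hatom a h⟩
end

section
/- With the monoid M of the previous construction (generated by A ∪ B with β_n := β − Σ_{i=1}^{n} 1/p_i ∈ B), the sequence of principal ideals (2β_n + M)_{n∈ℕ} is a strictly ascending chain that does not stabilize; hence M does not satisfy ACCP. -/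
/-- `β_n = β − Σ_{i=1}^n 1/pᵢ`. -/
noncomputable def betaSeq (p : ℕ → ℕ) (β : ℝ) (n : ℕ) : ℝ :=
  β - ∑ i ∈ Finset.range n, 1 / (p i : ℝ)

/-- The coset `b + M` inside `ℝ`. -/
def cosetR (M : AddSubmonoid ℝ) (b : ℝ) : Set ℝ := {x | ∃ c ∈ M, x = b + c}

/-- `M` satisfies ACCP. -/
def ACCPR (M : AddSubmonoid ℝ) : Prop :=
  ∀ f : ℕ → ℝ, (∀ n, f n ∈ M) → (∀ n, cosetR M (f n) ⊆ cosetR M (f (n + 1))) →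
    ∃ N, ∀ n, N ≤ n → cosetR M (f n) = cosetR M (f N)

theorem stmt17 (p : ℕ → ℕ) (hmono : StrictMono p) (hprime : ∀ n, (p n).Prime)
    (hodd : ∀ n, Odd (p n))
    (hsum : Summable (fun n => 1 / (p n : ℝ)))
    (hlt : (∑' n : ℕ, 1 / (p n : ℝ)) < 1 / 3)
    (β : ℝ) (hβ1 : 1 < β) (hβirr : Irrational β)
    (M : AddSubmonoid ℝ) (hM : M = AddSubmonoid.closure (Aset p ∪ Bset p β)) :
    (∀ n : ℕ, 2 * betaSeq p β n ∈ M) ∧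
    (∀ n : ℕ, cosetR M (2 * betaSeq p β n) ⊆ cosetR M (2 * betaSeq p β (n + 1)) ∧
      cosetR M (2 * betaSeq p β n) ≠ cosetR M (2 * betaSeq p β (n + 1))) ∧
    ¬ ACCPR M := by
  have hpos : ∀ i, (0:ℝ) < 1 / (p i : ℝ) := by
    intro i
    have h := (hprime i).pos
    have : (0:ℝ) < (p i : ℝ) := by exact_mod_cast h
    positivity
  -- every element of M is nonnegative
  have hMnonneg : ∀ x ∈ M, 0 ≤ x := by
    intro x hx
    rw [hM] at hx
    refine AddSubmonoid.closure_induction ?_ le_rfl (fun a b _ _ ha hb => add_nonneg ha hb) hx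
    intro y hy
    rcases hy with hy | hy
    · obtain ⟨s, k, hk, rfl⟩ := hy
      have h1 : (0:ℝ) ≤ ∑ i ∈ s, 1 / (p i : ℝ) :=
        Finset.sum_nonneg fun i _ => (hpos i).le
      linarith [hpos k]
    · obtain ⟨n, rfl⟩ := hy
      have h1 : ∑ i ∈ Finset.range n, 1 / (p i : ℝ) ≤ ∑' n, 1 / (p n : ℝ) :=
        Summable.sum_le_tsum (Finset.range n) (fun i _ => (hpos i).le) hsum
      linarith
  -- betaSeq n ∈ M
  have hbmem : ∀ n, betaSeq p β n ∈ M := by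
    intro n
    rw [hM]
    exact AddSubmonoid.subset_closure (Or.inr ⟨n, rfl⟩)
  have h2bmem : ∀ n, 2 * betaSeq p β n ∈ M := by
    intro n
    have := M.add_mem (hbmem n) (hbmem n)
    simpa [two_mul] using this
  -- 2/p n ∈ M
  have hAmem : ∀ n, 2 / (p n : ℝ) ∈ M := by
    intro n
    rw [hM]
    refine AddSubmonoid.subset_closure (Or.inl ⟨{n}, n, Finset.mem_singleton_self n, ?_⟩)
    rw [Finset.sum_singleton]
    ring
  -- key equation
  have hkey : ∀ n, 2 * betaSeq p β n = 2 * betaSeq p β (n + 1) + 2 / (p n : ℝ) := by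
    intro n
    simp only [betaSeq, Finset.sum_range_succ]
    ring
  have hsub : ∀ n, cosetR M (2 * betaSeq p β n) ⊆ cosetR M (2 * betaSeq p β (n + 1)) := by
    intro n x hx
    obtain ⟨c, hc, rfl⟩ := hx
    exact ⟨2 / (p n : ℝ) + c, M.add_mem (hAmem n) hc, by rw [hkey n]; ring⟩
  have hne : ∀ n, cosetR M (2 * betaSeq p β n) ≠ cosetR M (2 * betaSeq p β (n + 1)) := by
    intro n heq
    have hmem : 2 * betaSeq p β (n + 1) ∈ cosetR M (2 * betaSeq p β (n + 1)) :=
      ⟨0, M.zero_mem, (add_zero _).symm⟩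
    rw [← heq] at hmem
    obtain ⟨c, hc, hceq⟩ := hmem
    have hc0 := hMnonneg c hc
    have h2 : (0:ℝ) < 2 / (p n : ℝ) := by
      have h := hpos n
      have he : 2 / (p n:ℝ) = 2 * (1 / (p n:ℝ)) := by ring
      linarith
    have := hkey n
    linarith
  refine ⟨h2bmem, fun n => ⟨hsub n, hne n⟩, ?_⟩
  intro hacc
  obtain ⟨N, hN⟩ := hacc (fun n => 2 * betaSeq p β n) h2bmem hsub
  exact hne N (hN (N + 1) (Nat.le_succ N)).symm
end

section
/- Let P be the additive submonoid of ℚ≥0 generated by {1/pₙ : n ∈ ℕ} for a strictly increasing sequence of primes (pₙ). If q = Σ_{i=1}^{ℓ} n_i/p_i ∈ P with n_i ∈ ℕ₀ and min{n_j, n_k} ≥ 2 for some indices j ≠ k in [1,ℓ], then q lies in the submonoid ⟨A⟩ generated by A = { 1/p_{j_k} + Σ_{i=1}^{ℓ} 1/p_{j_i} : 1 ≤ k ≤ ℓ, j₁ < ... < j_ℓ }. -/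
/-- The set `A ⊆ ℚ`: sums of distinct generators `1/p_{j₁}, ..., 1/p_{j_ℓ}` with exactly
one of them counted twice. -/
def AsetQ (p : ℕ → ℕ) : Set ℚ :=
  {x | ∃ (s : Finset ℕ) (k : ℕ), k ∈ s ∧
    x = 1 / (p k : ℚ) + ∑ i ∈ s, 1 / (p i : ℚ)}

lemma two_div_mem_AsetQ (p : ℕ → ℕ) (k : ℕ) : (2 / (p k : ℚ)) ∈ AsetQ p := by
  refine ⟨{k}, k, Finset.mem_singleton_self k, ?_⟩
  simp [Finset.sum_singleton]
  ring

lemma pair_mem_AsetQ (p : ℕ → ℕ) {j k : ℕ} (hjk : j ≠ k) :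
    (1 / (p j : ℚ) + 2 / (p k : ℚ)) ∈ AsetQ p := by
  refine ⟨insert k {j}, k, Finset.mem_insert_self k _, ?_⟩
  rw [Finset.sum_insert (by simp [Ne.symm hjk])]
  simp [Finset.sum_singleton]
  ring

lemma even_sub_two_nat {a : ℕ} (h : Even a) : Even (a - 2) := by
  obtain ⟨m, rfl⟩ := h
  exact ⟨m - 1, by omega⟩

lemma even_sum_mem (p : ℕ → ℕ) (ℓ : ℕ) (d : ℕ → ℕ)
    (hd : ∀ i ∈ Finset.range ℓ, Even (d i)) :
    (∑ i ∈ Finset.range ℓ, (d i : ℚ) / (p i : ℚ)) ∈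
      AddSubmonoid.closure (AsetQ p) := by
  refine AddSubmonoid.sum_mem _ (fun i hi => ?_)
  obtain ⟨m, hm⟩ := hd i hi
  have h : (d i : ℚ) / (p i : ℚ) = m • (2 / (p i : ℚ)) := by
    rw [hm, nsmul_eq_mul]
    push_cast
    ring
  rw [h]
  exact nsmul_mem (AddSubmonoid.subset_closure (two_div_mem_AsetQ p i)) m

theorem stmt18 (p : ℕ → ℕ) (hmono : StrictMono p) (hprime : ∀ n, (p n).Prime)
    (hodd : ∀ n, Odd (p n))
    (hsum : Summable (fun n => 1 / (p n : ℝ)))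
    (hlt : (∑' n : ℕ, 1 / (p n : ℝ)) < 1 / 3) :
    ∀ (ℓ : ℕ) (c : ℕ → ℕ),
      (∃ j k : ℕ, j < ℓ ∧ k < ℓ ∧ j ≠ k ∧ 2 ≤ c j ∧ 2 ≤ c k) →
      (∑ i ∈ Finset.range ℓ, (c i : ℚ) / (p i : ℚ)) ∈
        AddSubmonoid.closure (AsetQ p) := by
  rintro ℓ c ⟨j, k, hj, hk, hjk, hcj, hck⟩
  classical
  set S : Finset ℕ := (Finset.range ℓ).filter (fun i => Odd (c i)) with hS
  set s₁ : Finset ℕ := insert j S with hs₁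
  have hjs₁ : j ∈ s₁ := Finset.mem_insert_self j S
  have hs₁sub : s₁ ⊆ Finset.range ℓ := by
    intro i hi
    rcases Finset.mem_insert.1 hi with h | h
    · exact h ▸ Finset.mem_range.2 hj
    · exact (Finset.mem_filter.1 h).1
  have ha₁ : (1 / (p j : ℚ) + ∑ i ∈ s₁, 1 / (p i : ℚ)) ∈ AsetQ p :=
    ⟨s₁, j, hjs₁, rfl⟩
  set c₁ : ℕ → ℕ := fun i =>
    c i - (if i ∈ s₁ then 1 else 0) - (if i = j then 1 else 0) with hc₁
  have hmemS : ∀ i, i ∈ S → Odd (c i) := fun i hi => (Finset.mem_filter.1 hi).2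
  have hSodd : ∀ i ∈ Finset.range ℓ, i ∉ S → Even (c i) := by
    intro i hi hns
    by_contra h
    exact hns (Finset.mem_filter.2 ⟨hi, Nat.not_even_iff_odd.1 h⟩)
  -- values of c₁
  have hc₁j : c₁ j = c j - 2 := by
    show c j - (if j ∈ s₁ then 1 else 0) - (if j = j then 1 else 0) = c j - 2
    rw [if_pos hjs₁, if_pos rfl]
    omega
  have hc₁S : ∀ i, i ∈ S → i ≠ j → c₁ i = c i - 1 := by
    intro i hiS hij
    show c i - (if i ∈ s₁ then 1 else 0) - (if i = j then 1 else 0) = c i - 1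
    rw [if_pos (Finset.mem_insert_of_mem hiS), if_neg hij]
    omega
  have hc₁out : ∀ i, i ∉ s₁ → i ≠ j → c₁ i = c i := by
    intro i h1 h2
    show c i - (if i ∈ s₁ then 1 else 0) - (if i = j then 1 else 0) = c i
    rw [if_neg h1, if_neg h2]
    omega
  have hnat1 : ∀ i ∈ Finset.range ℓ,
      c₁ i + (if i ∈ s₁ then 1 else 0) + (if i = j then 1 else 0) = c i := by
    intro i hi
    by_cases h2 : i = j
    · rw [h2, if_pos hjs₁, if_pos rfl, hc₁j]
      omega
    · by_cases h1 : i ∈ s₁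
      · have hiS : i ∈ S := by
          rcases Finset.mem_insert.1 h1 with h | h
          · exact absurd h h2
          · exact h
        have hpos : 1 ≤ c i := (hmemS i hiS).pos
        rw [if_pos h1, if_neg h2, hc₁S i hiS h2]
        omega
      · rw [if_neg h1, if_neg h2, hc₁out i h1 h2]
        omega
  have key1 : (∑ i ∈ Finset.range ℓ, (c i : ℚ) / (p i : ℚ)) =
      (1 / (p j : ℚ) + ∑ i ∈ s₁, 1 / (p i : ℚ)) +
        ∑ i ∈ Finset.range ℓ, (c₁ i : ℚ) / (p i : ℚ) := by
    have step : ∀ i ∈ Finset.range ℓ, (c i : ℚ) / (p i : ℚ) =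
        (c₁ i : ℚ) / (p i : ℚ) + (if i ∈ s₁ then 1 / (p i : ℚ) else 0) +
          (if i = j then 1 / (p i : ℚ) else 0) := by
      intro i hi
      have h1 := hnat1 i hi
      split_ifs at h1 ⊢ <;> rw [← h1] <;> push_cast <;> ring
    rw [Finset.sum_congr rfl step, Finset.sum_add_distrib, Finset.sum_add_distrib,
      Finset.sum_ite_mem, Finset.inter_eq_right.2 hs₁sub,
      Finset.sum_ite_eq' (Finset.range ℓ) j (fun i => 1 / (p i : ℚ)),
      if_pos (Finset.mem_range.2 hj)]
    ring
  rw [key1]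
  refine AddSubmonoid.add_mem _ (AddSubmonoid.subset_closure ha₁) ?_
  have hkj : k ≠ j := fun h => hjk h.symm
  by_cases hoj : Odd (c j)
  · -- need a second A-element: 1/p j + 2/p k
    have hj3 : 3 ≤ c j := by
      rcases hoj with ⟨m, hm⟩
      omega
    have hc₁k : 2 ≤ c₁ k ∧ Even (c₁ k) := by
      by_cases hkS : k ∈ S
      · have hoddk := hmemS k hkS
        have hk3 : 3 ≤ c k := by rcases hoddk with ⟨m, hm⟩; omega
        rw [hc₁S k hkS hkj]
        exact ⟨by omega, Nat.Odd.sub_odd hoddk odd_one⟩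
      · have hkns₁ : k ∉ s₁ := by
          simp only [hs₁, Finset.mem_insert]
          tauto
        rw [hc₁out k hkns₁ hkj]
        exact ⟨hck, hSodd k (Finset.mem_range.2 hk) hkS⟩
    set c₂ : ℕ → ℕ := fun i =>
      c₁ i - (if i = j then 1 else 0) - (if i = k then 2 else 0) with hc₂
    have hc₂j : c₂ j = c₁ j - 1 := by
      show c₁ j - (if j = j then 1 else 0) - (if j = k then 2 else 0) = c₁ j - 1
      rw [if_pos rfl, if_neg hjk]
      omega
    have hc₂k : c₂ k = c₁ k - 2 := by
      show c₁ k - (if k = j then 1 else 0) - (if k = k then 2 else 0) = c₁ k - 2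
      rw [if_pos rfl, if_neg hkj]
      omega
    have hc₂out : ∀ i, i ≠ j → i ≠ k → c₂ i = c₁ i := by
      intro i h2 h3
      show c₁ i - (if i = j then 1 else 0) - (if i = k then 2 else 0) = c₁ i
      rw [if_neg h2, if_neg h3]
      omega
    have hnat2 : ∀ i ∈ Finset.range ℓ,
        c₂ i + (if i = j then 1 else 0) + (if i = k then 2 else 0) = c₁ i := by
      intro i _
      by_cases h2 : i = j
      · rw [h2, if_pos rfl, if_neg hjk, hc₂j, hc₁j]
        omega
      · by_cases h3 : i = k
        · rw [h3, if_neg hkj, if_pos rfl, hc₂k]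
          omega
        · rw [if_neg h2, if_neg h3, hc₂out i h2 h3]
          omega
    have key2 : (∑ i ∈ Finset.range ℓ, (c₁ i : ℚ) / (p i : ℚ)) =
        (1 / (p j : ℚ) + 2 / (p k : ℚ)) +
          ∑ i ∈ Finset.range ℓ, (c₂ i : ℚ) / (p i : ℚ) := by
      have step : ∀ i ∈ Finset.range ℓ, (c₁ i : ℚ) / (p i : ℚ) =
          (c₂ i : ℚ) / (p i : ℚ) + (if i = j then 1 / (p i : ℚ) else 0) +
            (if i = k then 2 / (p i : ℚ) else 0) := by
        intro i hi
        have h1 := hnat2 i hi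
        split_ifs at h1 ⊢ <;> rw [← h1] <;> push_cast <;> ring
      rw [Finset.sum_congr rfl step, Finset.sum_add_distrib, Finset.sum_add_distrib,
        Finset.sum_ite_eq' (Finset.range ℓ) j (fun i => 1 / (p i : ℚ)),
        if_pos (Finset.mem_range.2 hj),
        Finset.sum_ite_eq' (Finset.range ℓ) k (fun i => 2 / (p i : ℚ)),
        if_pos (Finset.mem_range.2 hk)]
      ring
    rw [key2]
    refine AddSubmonoid.add_mem _
      (AddSubmonoid.subset_closure (pair_mem_AsetQ p hjk)) ?_
    refine even_sum_mem p ℓ c₂ ?_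
    intro i hi
    by_cases h2 : i = j
    · rw [h2, hc₂j, hc₁j]
      have : c j - 2 - 1 = c j - 3 := by omega
      rw [this]
      exact Nat.Odd.sub_odd hoj (by decide)
    · by_cases h3 : i = k
      · rw [h3, hc₂k]
        exact even_sub_two_nat hc₁k.2
      · rw [hc₂out i h2 h3]
        by_cases h1 : i ∈ s₁
        · have hiS : i ∈ S := by
            rcases Finset.mem_insert.1 h1 with h | h
            · exact absurd h h2
            · exact h
          rw [hc₁S i hiS h2]
          exact Nat.Odd.sub_odd (hmemS i hiS) odd_one
        · rw [hc₁out i h1 h2]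
          refine hSodd i hi ?_
          intro hiS
          exact h1 (Finset.mem_insert_of_mem hiS)
  · -- c j even: c₁ is even everywhere on range ℓ
    refine even_sum_mem p ℓ c₁ ?_
    intro i hi
    by_cases h2 : i = j
    · rw [h2, hc₁j]
      exact even_sub_two_nat (Nat.not_odd_iff_even.1 hoj)
    · by_cases h1 : i ∈ s₁
      · have hiS : i ∈ S := by
          rcases Finset.mem_insert.1 h1 with h | h
          · exact absurd h h2
          · exact h
        rw [hc₁S i hiS h2]
        exact Nat.Odd.sub_odd (hmemS i hiS) odd_one
      · rw [hc₁out i h1 h2]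
        refine hSodd i hi ?_
        intro hiS
        exact h1 (Finset.mem_insert_of_mem hiS)
end
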